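/- arXiv:1312.3306 — 3 statements merged into one kernel-verified Lean document; each statement's English description precedes it below -/
import Mathlib

section
/- Let (X_n) be i.i.d. with E[X] = -a < 0 and S_n the associated random walk. Then \sum_{k=1}^{\infty} P(L_k \ge 0) < \infty, where L_k = \min(S_1,...,S_k). -/
open MeasureTheory ProbabilityTheory Filter Set Asymptotics
open scoped Classical ENNReal NNReal Topology

set_option linter.unusedSectionVars false
set_option linter.unusedVariables false

noncomputable section

/-- Partial sums `S n = X 1 + ... + X n` (increments indexed from 1). -/
def walkSum {Ω : Type*} (X : ℕ → Ω → ℝ) (n : ℕ) (ω : Ω) : ℝ :=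
  ∑ i ∈ Finset.Icc 1 n, X i ω

/-- Running minimum `L n = min (S 1, ..., S n)`. -/
def walkMin {Ω : Type*} (X : ℕ → Ω → ℝ) (n : ℕ) (ω : Ω) : ℝ :=
  sInf ((fun k => walkSum X k ω) '' Set.Icc 1 n)

/-- Running maximum `M n = max (S 1, ..., S n)`. -/
def walkMax {Ω : Type*} (X : ℕ → Ω → ℝ) (n : ℕ) (ω : Ω) : ℝ :=
  sSup ((fun k => walkSum X k ω) '' Set.Icc 1 n)

/-- The increments are i.i.d. -/
def IsIIDWalk {Ω : Type*} [MeasurableSpace Ω] (μ : Measure Ω) (X : ℕ → Ω → ℝ) : Prop :=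
  (∀ i, Measurable (X i)) ∧ iIndepFun X μ ∧
    ∀ i, IdentDistrib (X i) (X 1) μ μ

/-- `l` is slowly varying at infinity. -/
def SlowlyVarying (l : ℝ → ℝ) : Prop :=
  (∀ᶠ x in atTop, 0 < l x) ∧
    ∀ c : ℝ, 0 < c → Tendsto (fun x => l (c * x) / l x) atTop (nhds 1)

/-- `Y` is non-lattice (non-arithmetic) under `μ`. -/
def NonLattice {Ω : Type*} [MeasurableSpace Ω] (μ : Measure Ω) (Y : Ω → ℝ) : Prop :=
  ¬ ∃ c d : ℝ, 0 < d ∧ ∀ᵐ ω ∂μ, ∃ k : ℤ, Y ω = c + k * d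

section Helpers

variable {Ω : Type*} [MeasurableSpace Ω] {μ : Measure Ω} [IsProbabilityMeasure μ]
  {X : ℕ → Ω → ℝ}

lemma walkSum_zero (ω : Ω) : walkSum X 0 ω = 0 := by simp [walkSum]

lemma measurable_walkSum (hm : ∀ i, Measurable (X i)) (n : ℕ) :
    Measurable (walkSum X n) :=
  Finset.measurable_sum _ fun i _ => hm i

/-- partial sums of a finite tuple -/
def finPsum {n : ℕ} (v : Fin n → ℝ) (k : ℕ) : ℝ :=
  ∑ i : Fin n, if (i : ℕ) < k then v i else 0

lemma measurable_finPsum {n k : ℕ} : Measurable fun v : Fin n → ℝ => finPsum v k := by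
  apply Finset.measurable_sum
  intro i _
  by_cases h : (i : ℕ) < k <;> simp [h, measurable_pi_apply]

lemma walkSum_sub (c j : ℕ) (ω : Ω) :
    walkSum X (c + j) ω - walkSum X c ω = ∑ i ∈ Finset.Ioc c (c + j), X i ω := by
  have h : Finset.Icc 1 (c + j) = Finset.Ioc 0 (c + j) := by
    rw [← Finset.Icc_add_one_left_eq_Ioc]; rfl
  have h2 : Finset.Icc 1 c = Finset.Ioc 0 c := by rw [← Finset.Icc_add_one_left_eq_Ioc]; rfl
  rw [walkSum, walkSum, h, h2, ← Finset.sum_Ioc_consecutive (fun i => X i ω)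
    (Nat.zero_le c) (Nat.le_add_right c j)]
  ring

lemma finPsum_tuple (ω : Ω) (c r j : ℕ) (hj : j ≤ r) :
    finPsum (fun i : Fin r => X (c + 1 + (i : ℕ)) ω) j
      = walkSum X (c + j) ω - walkSum X c ω := by
  rw [walkSum_sub]
  rw [finPsum, Fin.sum_univ_eq_sum_range (fun i => if i < j then X (c + 1 + i) ω else 0) r]
  rw [← Finset.sum_filter]
  have h1 : (Finset.range r).filter (· < j) = Finset.range j := by
    ext i; simp; omega
  rw [h1]
  have h2 : Finset.Ioc c (c + j) = Finset.Ico (c + 1) (c + j + 1) := by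
    ext i; simp only [Finset.mem_Ioc, Finset.mem_Ico]; omega
  rw [h2, Finset.sum_Ico_eq_sum_range]
  have h3 : c + j + 1 - (c + 1) = j := by omega
  rw [h3]

lemma finPsum_rev (ω : Ω) (n k : ℕ) (hk : k ≤ n) :
    finPsum (fun i : Fin n => X (n - (i : ℕ)) ω) k
      = walkSum X n ω - walkSum X (n - k) ω := by
  have hn : n - k + (n - (n - k)) = n := by omega
  have := walkSum_sub (X := X) (n - k) (n - (n - k)) (ω := ω)
  rw [hn] at this
  rw [this]
  rw [finPsum, Fin.sum_univ_eq_sum_range (fun i => if i < k then X (n - i) ω else 0) n]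
  rw [← Finset.sum_filter]
  have h1 : (Finset.range n).filter (· < k) = Finset.range k := by
    ext i; simp; omega
  rw [h1]
  apply Finset.sum_nbij' (fun i => n - i) (fun j => n - j)
  · intro i hi; simp at hi ⊢; omega
  · intro j hj; simp at hj ⊢; omega
  · intro i hi; simp at hi; omega
  · intro j hj; simp at hj ⊢; omega
  · intro i hi; rfl

lemma map_tuple (hm : ∀ i, Measurable (X i)) (hI : iIndepFun X μ)
    (hid : ∀ i, IdentDistrib (X i) (X 1) μ μ) {n : ℕ} (g : Fin n → ℕ)
    (hg : Function.Injective g) :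
    μ.map (fun ω (i : Fin n) => X (g i) ω) = Measure.pi (fun _ => μ.map (X 1)) := by
  haveI : IsProbabilityMeasure (μ.map (X 1)) := Measure.isProbabilityMeasure_map (hm 1).aemeasurable
  refine (Measure.pi_eq fun B hB => ?_).symm
  rw [Measure.map_apply (measurable_pi_lambda _ fun i => hm (g i)) (MeasurableSet.univ_pi hB)]
  classical
  set sets : ℕ → Set ℝ := fun j => if h : ∃ i, g i = j then B h.choose else Set.univ with hsets
  have hBg : ∀ i, sets (g i) = B i := by
    intro i
    have h : ∃ i', g i' = g i := ⟨i, rfl⟩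
    simp only [hsets, dif_pos h]
    rw [hg h.choose_spec]
  have hsetsmeas : ∀ j, MeasurableSet (sets j) := by
    intro j
    simp only [hsets]
    split
    · exact hB _
    · exact MeasurableSet.univ
  have hpre : (fun ω (i : Fin n) => X (g i) ω) ⁻¹' Set.pi Set.univ B
      = ⋂ j ∈ Finset.image g Finset.univ, X j ⁻¹' sets j := by
    ext ω
    simp only [Set.mem_preimage, Set.mem_univ_pi, Set.mem_iInter, Finset.mem_image,
      Finset.mem_univ, true_and]
    constructor
    · rintro h j ⟨i, rfl⟩
      rw [hBg i]; exact h i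
    · intro h i
      have := h (g i) ⟨i, rfl⟩
      rwa [hBg i] at this
  rw [hpre, hI.measure_inter_preimage_eq_mul _ (fun j _ => hsetsmeas j),
    Finset.prod_image (fun i _ j _ h => hg h)]
  refine Finset.prod_congr rfl fun i _ => ?_
  rw [hBg i, ← (hid (g i)).map_eq, Measure.map_apply (hm (g i)) (hB i)]

lemma measure_tuple_preimage_eq (hm : ∀ i, Measurable (X i))
    (hI : iIndepFun X μ)
    (hid : ∀ i, IdentDistrib (X i) (X 1) μ μ) {n : ℕ} (g g' : Fin n → ℕ)
    (hg : Function.Injective g) (hg' : Function.Injective g') {E : Set (Fin n → ℝ)}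
    (hE : MeasurableSet E) :
    μ ((fun ω (i : Fin n) => X (g i) ω) ⁻¹' E)
      = μ ((fun ω (i : Fin n) => X (g' i) ω) ⁻¹' E) := by
  rw [← Measure.map_apply (measurable_pi_lambda _ fun i => hm (g i)) hE,
    ← Measure.map_apply (measurable_pi_lambda _ fun i => hm (g' i)) hE,
    map_tuple hm hI hid g hg, map_tuple hm hI hid g' hg']

end Helpers

section Main
variable {Ω : Type*} [MeasurableSpace Ω] {μ : Measure Ω} [IsProbabilityMeasure μ]
  {X : ℕ → Ω → ℝ}

/-- event in tuple space: all partial sums at times `1..n` are nonneg -/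
def stayNonneg (n : ℕ) : Set (Fin n → ℝ) := {v | ∀ k ∈ Finset.Icc 1 n, 0 ≤ finPsum v k}

lemma measurableSet_stayNonneg {n : ℕ} : MeasurableSet (stayNonneg n) := by
  have : stayNonneg n = ⋂ k ∈ Finset.Icc 1 n, {v : Fin n → ℝ | 0 ≤ finPsum v k} := by
    ext v; simp [stayNonneg]
  rw [this]
  exact MeasurableSet.biInter (Finset.Icc 1 n : Finset ℕ).countable_toSet
    fun k _ => measurableSet_le measurable_const measurable_finPsum

lemma duality (hm : ∀ i, Measurable (X i)) (hI : iIndepFun X μ)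
    (hid : ∀ i, IdentDistrib (X i) (X 1) μ μ) (n : ℕ) :
    μ {ω | ∀ k ∈ Finset.Icc 1 n, 0 ≤ walkSum X k ω}
      = μ {ω | ∀ i < n, walkSum X i ω ≤ walkSum X n ω} := by
  have h1 : {ω | ∀ k ∈ Finset.Icc 1 n, 0 ≤ walkSum X k ω}
      = (fun ω (i : Fin n) => X ((0 : ℕ) + 1 + (i : ℕ)) ω) ⁻¹' stayNonneg n := by
    ext ω
    simp only [Set.mem_preimage, stayNonneg, Set.mem_setOf_eq]
    refine forall₂_congr fun k hk => ?_
    rw [Finset.mem_Icc] at hk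
    rw [finPsum_tuple ω 0 n k hk.2]
    simp [walkSum_zero]
  have h2 : {ω | ∀ i < n, walkSum X i ω ≤ walkSum X n ω}
      = (fun ω (i : Fin n) => X (n - (i : ℕ)) ω) ⁻¹' stayNonneg n := by
    ext ω
    simp only [Set.mem_preimage, stayNonneg, Set.mem_setOf_eq]
    constructor
    · intro h k hk
      rw [Finset.mem_Icc] at hk
      rw [finPsum_rev ω n k hk.2, sub_nonneg]
      exact h (n - k) (by omega)
    · intro h i hi
      have hk : n - i ∈ Finset.Icc 1 n := by rw [Finset.mem_Icc]; omega
      have := h (n - i) hk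
      rw [finPsum_rev ω n (n - i) (by omega), sub_nonneg] at this
      rwa [show n - (n - i) = i by omega] at this
  rw [h1, h2]
  exact measure_tuple_preimage_eq hm hI hid _ _
    (fun i j hij => by simpa using Fin.val_injective (by omega))
    (fun i j hij => Fin.val_injective (by omega : (i : ℕ) = j))
    measurableSet_stayNonneg

lemma walkMin_nonneg_iff {n : ℕ} (hn : 1 ≤ n) (ω : Ω) :
    walkMin X n ω ≥ 0 ↔ ∀ k ∈ Finset.Icc 1 n, 0 ≤ walkSum X k ω := by
  have hne : ((fun k => walkSum X k ω) '' Set.Icc 1 n).Nonempty :=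
    ⟨walkSum X 1 ω, ⟨1, ⟨le_refl 1, hn⟩, rfl⟩⟩
  have hfin : ((fun k => walkSum X k ω) '' Set.Icc 1 n).Finite :=
    (Set.finite_Icc 1 n).image _
  rw [walkMin, ge_iff_le, le_csInf_iff hfin.bddBelow hne]
  constructor
  · intro h k hk
    rw [Finset.mem_Icc] at hk
    exact h _ ⟨k, hk, rfl⟩
  · rintro h x ⟨k, hk, rfl⟩
    exact h k (by rw [Finset.mem_Icc]; exact hk)




lemma measurableSet_filter_card_eq {α : Type*} [MeasurableSpace α] (s : Finset ℕ)
    (P : ℕ → α → Prop) [inst : ∀ x, DecidablePred fun n => P n x]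
    (hP : ∀ n ∈ s, MeasurableSet {x | P n x}) (k : ℕ) :
    MeasurableSet {x | (s.filter fun n => P n x).card = k} := by
  classical
  have heq : {x | (s.filter fun n => P n x).card = k}
      = ⋃ u ∈ s.powerset.filter (fun u => u.card = k), ⋂ n ∈ s,
          (if n ∈ u then {x | P n x} else {x | P n x}ᶜ) := by
    ext x
    simp only [Set.mem_setOf_eq, Set.mem_iUnion, Finset.mem_filter, Finset.mem_powerset,
      Set.mem_iInter, exists_prop]
    constructor
    · intro h
      refine ⟨s.filter fun n => P n x, ⟨Finset.filter_subset _ _, h⟩, fun n hn => ?_⟩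
      by_cases hmem : P n x
      · rw [if_pos (Finset.mem_filter.2 ⟨hn, hmem⟩)]; exact hmem
      · rw [if_neg (show n ∉ s.filter (fun n => P n x) from
            fun hc => hmem (Finset.mem_filter.1 hc).2)]
        exact hmem
    · rintro ⟨u, ⟨hus, huk⟩, h⟩
      have hfu : s.filter (fun n => P n x) = u := by
        ext n
        simp only [Finset.mem_filter]
        constructor
        · rintro ⟨hn, hp⟩
          by_contra hnu
          have h2 := h n hn; rw [if_neg hnu] at h2; exact h2 hp
        · intro hnu
          have hn := hus hnu
          have h2 := h n hn; rw [if_pos hnu] at h2; exact ⟨hn, h2⟩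
      rw [hfu]; exact huk
  rw [heq]
  refine MeasurableSet.biUnion (Finset.countable_toSet _) fun u _ =>
    MeasurableSet.biInter (Finset.countable_toSet _) fun n hn => ?_
  split
  · exact hP n hn
  · exact (hP n hn).compl

lemma measurableSet_le_filter_card {α : Type*} [MeasurableSpace α] (s : Finset ℕ)
    (P : ℕ → α → Prop) [inst : ∀ x, DecidablePred fun n => P n x]
    (hP : ∀ n ∈ s, MeasurableSet {x | P n x}) (k : ℕ) :
    MeasurableSet {x | k ≤ (s.filter fun n => P n x).card} := by
  classical
  have heq : {x | k ≤ (s.filter fun n => P n x).card}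
      = ⋃ j ∈ Finset.Icc k s.card, {x | (s.filter fun n => P n x).card = j} := by
    ext x
    simp only [Set.mem_setOf_eq, Set.mem_iUnion, Finset.mem_Icc, exists_prop]
    constructor
    · intro h
      exact ⟨(s.filter fun n => P n x).card, ⟨h, Finset.card_filter_le _ _⟩, rfl⟩
    · rintro ⟨j, ⟨hj, _⟩, hx⟩; omega
  rw [heq]
  exact MeasurableSet.biUnion (Finset.countable_toSet _) fun j _ =>
    measurableSet_filter_card_eq s P hP j

lemma exists_kth_elem (s : Finset ℕ) (k : ℕ) (hk : 1 ≤ k) (hks : k ≤ s.card) :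
    ∃ m ∈ s, (s.filter (· ≤ m)).card = k := by
  classical
  set T := s.filter (fun m => k ≤ (s.filter (· ≤ m)).card) with hT
  have hsne : s.Nonempty := Finset.card_pos.1 (by omega)
  have hTne : T.Nonempty := by
    refine ⟨s.max' hsne, Finset.mem_filter.2 ⟨s.max'_mem hsne, ?_⟩⟩
    have : s.filter (· ≤ s.max' hsne) = s := by
      apply Finset.filter_true_of_mem
      intro x hx; exact s.le_max' x hx
    rw [this]; exact hks
  set m := T.min' hTne with hmdef
  have hmT : m ∈ T := T.min'_mem hTne
  have hms : m ∈ s := (Finset.mem_filter.1 hmT).1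
  have hge : k ≤ (s.filter (· ≤ m)).card := (Finset.mem_filter.1 hmT).2
  refine ⟨m, hms, ?_⟩
  by_contra hne
  have hgt : k < (s.filter (· ≤ m)).card := lt_of_le_of_ne hge (Ne.symm hne)
  -- split off m
  have hsplit : s.filter (· ≤ m) = insert m (s.filter (· < m)) := by
    ext x
    simp only [Finset.mem_filter, Finset.mem_insert]
    constructor
    · rintro ⟨hx, hxm⟩
      rcases eq_or_lt_of_le hxm with h | h
      · exact Or.inl h
      · exact Or.inr ⟨hx, h⟩
    · rintro (rfl | ⟨hx, hxm⟩)
      · exact ⟨hms, le_refl _⟩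
      · exact ⟨hx, le_of_lt hxm⟩
  have hnotmem : m ∉ s.filter (· < m) := by simp
  have hcard : (s.filter (· ≤ m)).card = (s.filter (· < m)).card + 1 := by
    rw [hsplit, Finset.card_insert_of_notMem hnotmem]
  have hklt : k ≤ (s.filter (· < m)).card := by omega
  have hltne : (s.filter (· < m)).Nonempty := Finset.card_pos.1 (by omega)
  set m' := (s.filter (· < m)).max' hltne with hm'def
  have hm'mem : m' ∈ s.filter (· < m) := Finset.max'_mem _ _
  have hm's : m' ∈ s := (Finset.mem_filter.1 hm'mem).1
  have hm'lt : m' < m := (Finset.mem_filter.1 hm'mem).2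
  have hsub : s.filter (· < m) ⊆ s.filter (· ≤ m') := by
    intro x hx
    have hxs := (Finset.mem_filter.1 hx).1
    exact Finset.mem_filter.2 ⟨hxs, hm'def ▸ Finset.le_max' _ x hx⟩
  have hm'T : m' ∈ T := by
    rw [hT, Finset.mem_filter]
    exact ⟨hm's, le_trans hklt (Finset.card_le_card hsub)⟩
  have := T.min'_le m' hm'T
  omega

end Main

section Records
variable {Ω : Type*} [MeasurableSpace Ω] {μ : Measure Ω} [IsProbabilityMeasure μ]
  {X : ℕ → Ω → ℝ}

def isRec (X : ℕ → Ω → ℝ) (n : ℕ) (ω : Ω) : Prop :=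
  ∀ i < n, walkSum X i ω ≤ walkSum X n ω

def recCount (X : ℕ → Ω → ℝ) (N : ℕ) (ω : Ω) : ℕ :=
  ((Finset.Icc 1 N).filter fun n => isRec X n ω).card

def sigmaSet (X : ℕ → Ω → ℝ) (k m : ℕ) : Set Ω :=
  {ω | isRec X m ω ∧ recCount X m ω = k}

def futureHit (X : ℕ → Ω → ℝ) (m r : ℕ) : Set Ω :=
  {ω | ∃ j ∈ Finset.Icc 1 r, 0 ≤ walkSum X (m + j) ω - walkSum X m ω}

def hitSet (X : ℕ → Ω → ℝ) : Set Ω := {ω | ∃ j, 1 ≤ j ∧ 0 ≤ walkSum X j ω}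

lemma measurableSet_isRec (hm : ∀ i, Measurable (X i)) (n : ℕ) :
    MeasurableSet {ω | isRec X n ω} := by
  have h : {ω | isRec X n ω} = ⋂ i ∈ Finset.range n, {ω | walkSum X i ω ≤ walkSum X n ω} := by
    ext ω; simp [isRec]
  rw [h]
  exact MeasurableSet.biInter (Finset.range n).countable_toSet fun i _ =>
    measurableSet_le (measurable_walkSum hm i) (measurable_walkSum hm n)

lemma measurableSet_recCount_eq (hm : ∀ i, Measurable (X i)) (N k : ℕ) :
    MeasurableSet {ω | recCount X N ω = k} := by
  unfold recCount
  exact measurableSet_filter_card_eq _ _ (fun n _ => measurableSet_isRec hm n) k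

lemma measurableSet_le_recCount (hm : ∀ i, Measurable (X i)) (N k : ℕ) :
    MeasurableSet {ω | k ≤ recCount X N ω} := by
  unfold recCount
  exact measurableSet_le_filter_card _ _ (fun n _ => measurableSet_isRec hm n) k

lemma measurableSet_sigmaSet (hm : ∀ i, Measurable (X i)) (k m : ℕ) :
    MeasurableSet (sigmaSet X k m) := by
  have h : sigmaSet X k m = {ω | isRec X m ω} ∩ {ω | recCount X m ω = k} := rfl
  rw [h]
  exact (measurableSet_isRec hm m).inter (measurableSet_recCount_eq hm m k)

lemma measurableSet_futureHit (hm : ∀ i, Measurable (X i)) (m r : ℕ) :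
    MeasurableSet (futureHit X m r) := by
  have h : futureHit X m r = ⋃ j ∈ Finset.Icc 1 r,
      {ω | 0 ≤ walkSum X (m + j) ω - walkSum X m ω} := by
    ext ω; simp [futureHit]
  rw [h]
  exact MeasurableSet.biUnion (Finset.countable_toSet _) fun j _ =>
    measurableSet_le measurable_const ((measurable_walkSum hm _).sub (measurable_walkSum hm m))

lemma recCount_mono (ω : Ω) {m N : ℕ} (h : m ≤ N) : recCount X m ω ≤ recCount X N ω :=
  Finset.card_le_card (Finset.filter_subset_filter _ (Finset.Icc_subset_Icc_right h))

lemma recCount_le (ω : Ω) (N : ℕ) : recCount X N ω ≤ N := by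
  have h1 : recCount X N ω ≤ (Finset.Icc 1 N).card := Finset.card_filter_le _ _
  simpa [Nat.card_Icc] using h1

lemma recCount_restrict (ω : Ω) {m N : ℕ} (h : m ≤ N) :
    ((Finset.Icc 1 N).filter fun n => isRec X n ω).filter (· ≤ m)
      = (Finset.Icc 1 m).filter fun n => isRec X n ω := by
  ext n
  simp only [Finset.mem_filter, Finset.mem_Icc]
  constructor
  · rintro ⟨⟨⟨h1, _⟩, h3⟩, h4⟩; exact ⟨⟨h1, h4⟩, h3⟩
  · rintro ⟨⟨h1, h2⟩, h3⟩; exact ⟨⟨⟨h1, le_trans h2 h⟩, h3⟩, h2⟩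

lemma le_recCount_subset (k N : ℕ) (hk : 1 ≤ k) :
    {ω | k + 1 ≤ recCount X N ω}
      ⊆ ⋃ m ∈ Finset.Icc 1 N, (sigmaSet X k m ∩ futureHit X m (N - m)) := by
  intro ω hω
  simp only [Set.mem_setOf_eq] at hω
  set s := (Finset.Icc 1 N).filter fun n => isRec X n ω with hs
  have hsc : s.card = recCount X N ω := rfl
  obtain ⟨m, hms, hmcard⟩ := exists_kth_elem s k hk (by omega)
  obtain ⟨m', hm's, hm'card⟩ := exists_kth_elem s (k + 1) (by omega) (by omega)
  have hmm' : m < m' := by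
    by_contra hcon
    push_neg at hcon
    have hsub : s.filter (· ≤ m') ⊆ s.filter (· ≤ m) := by
      intro x hx
      rw [Finset.mem_filter] at hx ⊢
      exact ⟨hx.1, le_trans hx.2 hcon⟩
    have := Finset.card_le_card hsub
    omega
  have hmIcc : m ∈ Finset.Icc 1 N := (Finset.mem_filter.1 hms).1
  have hm'Icc : m' ∈ Finset.Icc 1 N := (Finset.mem_filter.1 hm's).1
  have hmrec : isRec X m ω := (Finset.mem_filter.1 hms).2
  have hm'rec : isRec X m' ω := (Finset.mem_filter.1 hm's).2
  rw [Finset.mem_Icc] at hmIcc hm'Icc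
  have hcount : recCount X m ω = k := by
    rw [recCount, ← recCount_restrict ω hmIcc.2, ← hs, hmcard]
  refine Set.mem_biUnion (Finset.mem_Icc.2 hmIcc) ⟨⟨hmrec, hcount⟩, ?_⟩
  refine ⟨m' - m, Finset.mem_Icc.2 ⟨by omega, by omega⟩, ?_⟩
  have hle := hm'rec m hmm'
  rw [show m + (m' - m) = m' by omega]
  linarith

lemma sigmaSet_pairwise_disjoint (k N : ℕ) :
    Set.PairwiseDisjoint ↑(Finset.Icc 1 N) (fun m => sigmaSet X k m) := by
  have key : ∀ m m' : ℕ, m < m' → Disjoint (sigmaSet X k m) (sigmaSet X k m') := by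
    intro m m' hlt
    rw [Set.disjoint_left]
    rintro ω ⟨hrec, hcount⟩ ⟨hrec', hcount'⟩
    have hsub : insert m' ((Finset.Icc 1 m).filter fun n => isRec X n ω)
        ⊆ (Finset.Icc 1 m').filter fun n => isRec X n ω := by
      intro x hx
      rcases Finset.mem_insert.1 hx with rfl | hx2
      · exact Finset.mem_filter.2 ⟨Finset.mem_Icc.2 ⟨by omega, le_refl _⟩, hrec'⟩
      · rw [Finset.mem_filter, Finset.mem_Icc] at hx2 ⊢
        exact ⟨⟨hx2.1.1, by omega⟩, hx2.2⟩
    have hnm : m' ∉ (Finset.Icc 1 m).filter fun n => isRec X n ω := by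
      rw [Finset.mem_filter, Finset.mem_Icc]
      rintro ⟨⟨_, h2⟩, _⟩; omega
    have hcard := Finset.card_le_card hsub
    rw [Finset.card_insert_of_notMem hnm] at hcard
    rw [recCount] at hcount hcount'
    omega
  intro m _ m' _ hne
  rcases lt_or_gt_of_ne hne with h | h
  · exact key m m' h
  · exact (key m' m h).symm

lemma biUnion_sigmaSet_subset (k N : ℕ) :
    (⋃ m ∈ Finset.Icc 1 N, sigmaSet X k m) ⊆ {ω | k ≤ recCount X N ω} := by
  intro ω hω
  rw [Set.mem_iUnion₂] at hω
  obtain ⟨m, hm, ⟨_, hcount⟩⟩ := hω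
  rw [Finset.mem_Icc] at hm
  exact le_trans (le_of_eq hcount.symm) (recCount_mono ω hm.2)

def subPsum (s : Finset ℕ) (v : {x // x ∈ s} → ℝ) (j : ℕ) : ℝ :=
  ∑ i : {x // x ∈ s}, if (i : ℕ) ≤ j then v i else 0

lemma measurable_subPsum {s : Finset ℕ} {j : ℕ} :
    Measurable fun v : {x // x ∈ s} → ℝ => subPsum s v j := by
  apply Finset.measurable_sum
  intro i _
  by_cases h : (i : ℕ) ≤ j <;> simp [h, measurable_pi_apply]

lemma subPsum_Icc_one (ω : Ω) {m j : ℕ} (hj : j ≤ m) :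
    subPsum (Finset.Icc 1 m) (fun i => X (i : ℕ) ω) j = walkSum X j ω := by
  rw [subPsum, Finset.sum_coe_sort _ (fun i => if i ≤ j then X i ω else 0)]
  rw [walkSum]
  rw [← Finset.sum_subset (Finset.Icc_subset_Icc_right hj)
    (fun x hx hnx => by
      rw [if_neg]
      rw [Finset.mem_Icc] at hx hnx
      omega)]
  exact Finset.sum_congr rfl fun i hi => if_pos (Finset.mem_Icc.1 hi).2

lemma subPsum_Icc_two (ω : Ω) {m j N : ℕ} (hmj : m ≤ j) (hjN : j ≤ N) :
    subPsum (Finset.Icc (m + 1) N) (fun i => X (i : ℕ) ω) j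
      = walkSum X j ω - walkSum X m ω := by
  have hws := walkSum_sub (X := X) m (j - m) (ω := ω)
  rw [show m + (j - m) = j by omega] at hws
  rw [subPsum, Finset.sum_coe_sort _ (fun i => if i ≤ j then X i ω else 0), hws]
  have hIcc : Finset.Ioc m j = Finset.Icc (m + 1) j := by
    ext x; simp only [Finset.mem_Ioc, Finset.mem_Icc]; omega
  rw [hIcc]
  rw [← Finset.sum_subset (Finset.Icc_subset_Icc_right hjN)
    (fun x hx hnx => by
      rw [if_neg]
      rw [Finset.mem_Icc] at hx hnx
      omega)]
  exact Finset.sum_congr rfl fun i hi => if_pos (Finset.mem_Icc.1 hi).2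

def sigmaTuple (k m : ℕ) : Set ({x // x ∈ Finset.Icc 1 m} → ℝ) :=
  {v | (∀ i < m, subPsum _ v i ≤ subPsum _ v m) ∧
    ((Finset.Icc 1 m).filter fun n => ∀ i < n, subPsum _ v i ≤ subPsum _ v n).card = k}

lemma measurableSet_sigmaTuple {k m : ℕ} : MeasurableSet (sigmaTuple k m) := by
  have hP : ∀ n, MeasurableSet {v : {x // x ∈ Finset.Icc 1 m} → ℝ |
      ∀ i < n, subPsum _ v i ≤ subPsum _ v n} := by
    intro n
    have h : {v : {x // x ∈ Finset.Icc 1 m} → ℝ | ∀ i < n, subPsum _ v i ≤ subPsum _ v n}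
        = ⋂ i ∈ Finset.range n, {v | subPsum _ v i ≤ subPsum _ v n} := by
      ext v
      simp only [Set.mem_setOf_eq, Set.mem_iInter, Finset.mem_range]
    rw [h]
    exact MeasurableSet.biInter (Finset.countable_toSet _) fun i _ =>
      measurableSet_le measurable_subPsum measurable_subPsum
  have h2 := measurableSet_filter_card_eq (Finset.Icc 1 m)
      (fun n v => ∀ i < n, subPsum (Finset.Icc 1 m) v i ≤ subPsum (Finset.Icc 1 m) v n)
      (fun n _ => hP n) k
  have hdec : sigmaTuple k m
      = {v : {x // x ∈ Finset.Icc 1 m} → ℝ |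
          ∀ i < m, subPsum _ v i ≤ subPsum _ v m}
        ∩ {v | ((Finset.Icc 1 m).filter fun n =>
            ∀ i < n, subPsum _ v i ≤ subPsum _ v n).card = k} := rfl
  rw [hdec]
  exact (hP m).inter h2

lemma sigmaSet_eq_preimage (k m : ℕ) :
    sigmaSet X k m
      = (fun ω (i : {x // x ∈ Finset.Icc 1 m}) => X (i : ℕ) ω) ⁻¹' sigmaTuple k m := by
  ext ω
  simp only [sigmaSet, sigmaTuple, Set.mem_preimage, Set.mem_setOf_eq]
  have hbr : ∀ n ≤ m, (∀ i < n, subPsum (Finset.Icc 1 m) (fun i => X (i : ℕ) ω) i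
      ≤ subPsum (Finset.Icc 1 m) (fun i => X (i : ℕ) ω) n) ↔ isRec X n ω := by
    intro n hn
    unfold isRec
    refine forall₂_congr fun i hi => ?_
    rw [subPsum_Icc_one ω (by omega), subPsum_Icc_one ω hn]
  have hfilter : ((Finset.Icc 1 m).filter fun n =>
        ∀ i < n, subPsum (Finset.Icc 1 m) (fun i => X (i : ℕ) ω) i
          ≤ subPsum (Finset.Icc 1 m) (fun i => X (i : ℕ) ω) n)
      = (Finset.Icc 1 m).filter fun n => isRec X n ω := by
    apply Finset.filter_congr
    intro n hn
    rw [Finset.mem_Icc] at hn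
    exact hbr n hn.2
  rw [hfilter]
  unfold recCount
  rw [hbr m le_rfl]

def futureTuple (m N : ℕ) : Set ({x // x ∈ Finset.Icc (m + 1) N} → ℝ) :=
  {v | ∃ j ∈ Finset.Icc 1 (N - m), 0 ≤ subPsum _ v (m + j)}

lemma measurableSet_futureTuple {m N : ℕ} : MeasurableSet (futureTuple m N) := by
  have h : futureTuple m N = ⋃ j ∈ Finset.Icc 1 (N - m),
      {v : {x // x ∈ Finset.Icc (m + 1) N} → ℝ | 0 ≤ subPsum _ v (m + j)} := by
    ext v
    simp only [futureTuple, Set.mem_setOf_eq, Set.mem_iUnion, exists_prop]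
  rw [h]
  exact MeasurableSet.biUnion (Finset.countable_toSet _) fun j _ =>
    measurableSet_le measurable_const measurable_subPsum

lemma futureHit_eq_preimage (m N : ℕ) (hmN : m ≤ N) :
    futureHit X m (N - m)
      = (fun ω (i : {x // x ∈ Finset.Icc (m + 1) N}) => X (i : ℕ) ω) ⁻¹' futureTuple m N := by
  ext ω
  simp only [futureHit, futureTuple, Set.mem_preimage, Set.mem_setOf_eq]
  refine exists_congr fun j => and_congr_right fun hj => ?_
  rw [Finset.mem_Icc] at hj
  rw [subPsum_Icc_two ω (by omega) (by omega), sub_nonneg, ← sub_nonneg]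

lemma measure_sigma_inter_future (hm : ∀ i, Measurable (X i))
    (hI : iIndepFun X μ) (k m N : ℕ) (hmN : m ≤ N) :
    μ (sigmaSet X k m ∩ futureHit X m (N - m))
      = μ (sigmaSet X k m) * μ (futureHit X m (N - m)) := by
  have hdisj : Disjoint (Finset.Icc 1 m) (Finset.Icc (m + 1) N) := by
    rw [Finset.disjoint_left]
    intro x hx hx'
    rw [Finset.mem_Icc] at hx hx'
    omega
  have hindep := hI.indepFun_finset _ _ hdisj hm
  rw [sigmaSet_eq_preimage (X := X) k m, futureHit_eq_preimage (X := X) m N hmN]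
  exact (indepFun_iff_measure_inter_preimage_eq_mul.1 hindep) _ _
    measurableSet_sigmaTuple measurableSet_futureTuple

def hitTuple (r : ℕ) : Set (Fin r → ℝ) := {v | ∃ j ∈ Finset.Icc 1 r, 0 ≤ finPsum v j}

lemma measurableSet_hitTuple {r : ℕ} : MeasurableSet (hitTuple r) := by
  have h : hitTuple r = ⋃ j ∈ Finset.Icc 1 r, {v : Fin r → ℝ | 0 ≤ finPsum v j} := by
    ext v
    simp only [hitTuple, Set.mem_setOf_eq, Set.mem_iUnion, exists_prop]
  rw [h]
  exact MeasurableSet.biUnion (Finset.countable_toSet _) fun j _ =>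
    measurableSet_le measurable_const measurable_finPsum

lemma futureHit_tuple_eq (m r : ℕ) :
    futureHit X m r = (fun ω (i : Fin r) => X (m + 1 + (i : ℕ)) ω) ⁻¹' hitTuple r := by
  ext ω
  simp only [futureHit, hitTuple, Set.mem_preimage, Set.mem_setOf_eq]
  refine exists_congr fun j => and_congr_right fun hj => ?_
  rw [Finset.mem_Icc] at hj
  rw [finPsum_tuple ω m r j hj.2, sub_nonneg, ← sub_nonneg]

lemma measure_futureHit_le (hm : ∀ i, Measurable (X i))
    (hI : iIndepFun X μ)
    (hid : ∀ i, IdentDistrib (X i) (X 1) μ μ) (m r : ℕ) :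
    μ (futureHit X m r) ≤ μ (hitSet X) := by
  rw [futureHit_tuple_eq (X := X) m r]
  rw [measure_tuple_preimage_eq hm hI hid (fun i : Fin r => m + 1 + (i : ℕ))
    (fun i : Fin r => 0 + 1 + (i : ℕ))
    (fun i j hij => by
      have h' : m + 1 + (i : ℕ) = m + 1 + (j : ℕ) := hij
      exact Fin.val_injective (by omega))
    (fun i j hij => by
      have h' : 0 + 1 + (i : ℕ) = 0 + 1 + (j : ℕ) := hij
      exact Fin.val_injective (by omega))
    measurableSet_hitTuple]
  apply measure_mono
  intro ω hω
  simp only [Set.mem_preimage, hitTuple, Set.mem_setOf_eq] at hω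
  obtain ⟨j, hj, h0⟩ := hω
  rw [Finset.mem_Icc] at hj
  rw [finPsum_tuple ω 0 r j hj.2] at h0
  refine ⟨j, hj.1, ?_⟩
  simpa [walkSum_zero] using h0

lemma measure_le_recCount_succ (hm : ∀ i, Measurable (X i))
    (hI : iIndepFun X μ)
    (hid : ∀ i, IdentDistrib (X i) (X 1) μ μ) (k N : ℕ) (hk : 1 ≤ k) :
    μ {ω | k + 1 ≤ recCount X N ω} ≤ μ (hitSet X) * μ {ω | k ≤ recCount X N ω} := by
  have h1 : μ {ω | k + 1 ≤ recCount X N ω}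
      ≤ ∑ m ∈ Finset.Icc 1 N, μ (sigmaSet X k m ∩ futureHit X m (N - m)) :=
    le_trans (measure_mono (le_recCount_subset k N hk)) (measure_biUnion_finset_le _ _)
  have h2 : ∑ m ∈ Finset.Icc 1 N, μ (sigmaSet X k m ∩ futureHit X m (N - m))
      ≤ μ (hitSet X) * ∑ m ∈ Finset.Icc 1 N, μ (sigmaSet X k m) := by
    rw [Finset.mul_sum]
    refine Finset.sum_le_sum fun m hmm => ?_
    rw [Finset.mem_Icc] at hmm
    rw [measure_sigma_inter_future hm hI k m N hmm.2, mul_comm]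
    exact mul_le_mul_left (measure_futureHit_le hm hI hid m (N - m)) _
  have h3 : ∑ m ∈ Finset.Icc 1 N, μ (sigmaSet X k m)
      = μ (⋃ m ∈ Finset.Icc 1 N, sigmaSet X k m) :=
    (measure_biUnion_finset (sigmaSet_pairwise_disjoint k N)
      (fun m _ => measurableSet_sigmaSet hm k m)).symm
  have h4 : μ (⋃ m ∈ Finset.Icc 1 N, sigmaSet X k m) ≤ μ {ω | k ≤ recCount X N ω} :=
    measure_mono (biUnion_sigmaSet_subset k N)
  refine le_trans h1 (le_trans h2 ?_)
  rw [h3]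
  exact mul_le_mul_right h4 _

lemma measure_le_recCount_pow (hm : ∀ i, Measurable (X i))
    (hI : iIndepFun X μ)
    (hid : ∀ i, IdentDistrib (X i) (X 1) μ μ) (N : ℕ) :
    ∀ k, 1 ≤ k → μ {ω | k ≤ recCount X N ω} ≤ μ (hitSet X) ^ (k - 1) := by
  intro k
  induction k with
  | zero => omega
  | succ k ih =>
    intro _
    rcases Nat.eq_zero_or_pos k with rfl | hk
    · simpa using prob_le_one
    · calc μ {ω | k + 1 ≤ recCount X N ω}
          ≤ μ (hitSet X) * μ {ω | k ≤ recCount X N ω} :=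
            measure_le_recCount_succ hm hI hid k N hk
        _ ≤ μ (hitSet X) * μ (hitSet X) ^ (k - 1) := mul_le_mul_right (ih hk) _
        _ = μ (hitSet X) ^ (k + 1 - 1) := by
            rw [← pow_succ']
            congr 1
            omega

lemma sum_measure_isRec_eq (hm : ∀ i, Measurable (X i)) (N : ℕ) :
    ∑ n ∈ Finset.Icc 1 N, μ {ω | isRec X n ω}
      = ∑ k ∈ Finset.Icc 1 N, μ {ω | k ≤ recCount X N ω} := by
  have lhs : ∀ (s : Finset ℕ) (P : ℕ → Set Ω), (∀ n ∈ s, MeasurableSet (P n)) →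
      ∑ n ∈ s, μ (P n)
        = ∫⁻ ω, (∑ n ∈ s, (P n).indicator (1 : Ω → ℝ≥0∞) ω) ∂μ := by
    intro s P hP
    rw [lintegral_finset_sum _ (fun n hn => measurable_one.indicator (hP n hn))]
    exact Finset.sum_congr rfl fun n hn => (lintegral_indicator_one (hP n hn)).symm
  rw [lhs _ _ (fun n _ => measurableSet_isRec hm n),
      lhs _ _ (fun k _ => measurableSet_le_recCount hm N k)]
  apply lintegral_congr
  intro ω
  have e1 : ∑ n ∈ Finset.Icc 1 N, ({ω | isRec X n ω}).indicator (1 : Ω → ℝ≥0∞) ω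
      = (recCount X N ω : ℝ≥0∞) := by
    simp only [Set.indicator_apply, Set.mem_setOf_eq, Pi.one_apply]
    rw [Finset.sum_boole, recCount]
  have e2 : ∑ k ∈ Finset.Icc 1 N, ({ω | k ≤ recCount X N ω}).indicator (1 : Ω → ℝ≥0∞) ω
      = (recCount X N ω : ℝ≥0∞) := by
    simp only [Set.indicator_apply, Set.mem_setOf_eq, Pi.one_apply]
    rw [Finset.sum_boole]
    congr 1
    have hfil : (Finset.Icc 1 N).filter (fun k => k ≤ recCount X N ω)
        = Finset.Icc 1 (recCount X N ω) := by
      have hle := recCount_le (X := X) ω N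
      ext x
      simp only [Finset.mem_filter, Finset.mem_Icc]
      omega
    rw [hfil, Nat.card_Icc]
    omega
  rw [e1, e2]

lemma sum_measure_isRec_le (hm : ∀ i, Measurable (X i))
    (hI : iIndepFun X μ)
    (hid : ∀ i, IdentDistrib (X i) (X 1) μ μ) (N : ℕ) :
    ∑ n ∈ Finset.Icc 1 N, μ {ω | isRec X n ω} ≤ (1 - μ (hitSet X))⁻¹ := by
  rw [sum_measure_isRec_eq hm N]
  have hIco : Finset.Icc 1 N = Finset.Ico 1 (N + 1) := by
    ext x; simp only [Finset.mem_Icc, Finset.mem_Ico]; omega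
  calc ∑ k ∈ Finset.Icc 1 N, μ {ω | k ≤ recCount X N ω}
      ≤ ∑ k ∈ Finset.Icc 1 N, μ (hitSet X) ^ (k - 1) := by
        refine Finset.sum_le_sum fun k hk => ?_
        rw [Finset.mem_Icc] at hk
        exact measure_le_recCount_pow hm hI hid N k hk.1
    _ = ∑ j ∈ Finset.range N, μ (hitSet X) ^ j := by
        rw [hIco, Finset.sum_Ico_eq_sum_range]
        simp
    _ ≤ ∑' j : ℕ, μ (hitSet X) ^ j := ENNReal.sum_le_tsum _
    _ = (1 - μ (hitSet X))⁻¹ := ENNReal.tsum_geometric _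

def escSet (X : ℕ → Ω → ℝ) (c : ℝ) : Set Ω := {ω | ∃ j, 1 ≤ j ∧ c ≤ walkSum X j ω}

lemma measurableSet_escSet (hm : ∀ i, Measurable (X i)) (c : ℝ) :
    MeasurableSet (escSet X c) := by
  have h : escSet X c = ⋃ j ∈ {j : ℕ | 1 ≤ j}, {ω | c ≤ walkSum X j ω} := by
    ext ω; simp [escSet]
  rw [h]
  exact MeasurableSet.biUnion (Set.to_countable _)
    fun j _ => measurableSet_le measurable_const (measurable_walkSum hm j)

lemma hitSet_eq_escSet : hitSet X = escSet X 0 := rfl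

lemma walkSum_div_tendsto (hI : iIndepFun X μ)
    (hid : ∀ i, IdentDistrib (X i) (X 1) μ μ)
    (hint : Integrable (X 1) μ) {a : ℝ} (hmean : μ[X 1] = -a) :
    ∀ᵐ ω ∂μ, Tendsto (fun n => walkSum X n ω / n) atTop (𝓝 (-a)) := by
  have h := strong_law_ae_real (fun i => X (i + 1)) hint
    (fun i j hij => hI.indepFun (by omega))
    (fun i => (hid (i + 1)).trans (hid 1).symm)
  have hmean' : μ[(fun i => X (i + 1)) 0] = -a := hmean
  rw [hmean'] at h
  filter_upwards [h] with ω hω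
  have hsum : ∀ n, ∑ i ∈ Finset.range n, X (i + 1) ω = walkSum X n ω := by
    intro n
    rw [walkSum, show Finset.Icc 1 n = Finset.Ico 1 (n + 1) from (Finset.Ico_add_one_right_eq_Icc 1 n).symm,
      Finset.sum_Ico_eq_sum_range]
    simp only [Nat.add_sub_cancel]
    exact Finset.sum_congr rfl fun i _ => by rw [add_comm]
  have : (fun n : ℕ => (∑ i ∈ Finset.range n, X (i + 1) ω) / n)
      = fun n : ℕ => walkSum X n ω / n := by
    funext n; rw [hsum n]
  rwa [this] at hω

lemma measure_iInter_escSet (hm : ∀ i, Measurable (X i))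
    (hI : iIndepFun X μ)
    (hid : ∀ i, IdentDistrib (X i) (X 1) μ μ)
    (hint : Integrable (X 1) μ) {a : ℝ} (ha : 0 < a) (hmean : μ[X 1] = -a) :
    μ (⋂ c : ℕ, escSet X (c : ℝ)) = 0 := by
  rw [measure_eq_zero_iff_ae_notMem]
  filter_upwards [walkSum_div_tendsto hI hid hint hmean] with ω hω
  intro hmem
  rw [Set.mem_iInter] at hmem
  have hev : ∀ᶠ n : ℕ in atTop, walkSum X n ω / (n : ℝ) < -a / 2 :=
    hω.eventually_lt_const (by linarith)
  obtain ⟨n₀, hn₀⟩ := eventually_atTop.1 hev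
  have hne : ((Finset.range (n₀ + 1)).image fun j => walkSum X j ω).Nonempty :=
    (Finset.nonempty_range_iff.2 (by omega)).image _
  set M := ((Finset.range (n₀ + 1)).image fun j => walkSum X j ω).max' hne with hM
  have hbound : ∀ j, walkSum X j ω ≤ max M 0 := by
    intro j
    rcases le_or_gt j n₀ with hj | hj
    · refine le_trans (Finset.le_max' _ _ ?_) (le_max_left _ _)
      exact Finset.mem_image_of_mem _ (Finset.mem_range.2 (by omega))
    · have hdiv := hn₀ j (by omega)
      have hjpos : (0 : ℝ) < j := by
        have : 1 ≤ j := by omega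
        exact_mod_cast Nat.lt_of_lt_of_le Nat.zero_lt_one this
      rw [div_lt_iff₀ hjpos] at hdiv
      have : walkSum X j ω ≤ 0 := by nlinarith
      exact le_trans this (le_max_right _ _)
  obtain ⟨c, hc⟩ := exists_nat_gt (max M 0)
  obtain ⟨j, _, hjc⟩ := hmem c
  have := hbound j
  linarith

def fhit (X : ℕ → Ω → ℝ) (m r : ℕ) (c : ℝ) : Set Ω :=
  {ω | ∃ j ∈ Finset.Icc 1 r, c ≤ walkSum X (m + j) ω - walkSum X m ω}

lemma measurableSet_fhit (hm : ∀ i, Measurable (X i)) (m r : ℕ) (c : ℝ) :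
    MeasurableSet (fhit X m r c) := by
  have h : fhit X m r c = ⋃ j ∈ Finset.Icc 1 r,
      {ω | c ≤ walkSum X (m + j) ω - walkSum X m ω} := by
    ext ω; simp [fhit]
  rw [h]
  exact MeasurableSet.biUnion (Finset.countable_toSet _) fun j _ =>
    measurableSet_le measurable_const ((measurable_walkSum hm _).sub (measurable_walkSum hm m))

def fhitTupleFin (r : ℕ) (c : ℝ) : Set (Fin r → ℝ) := {v | ∃ j ∈ Finset.Icc 1 r, c ≤ finPsum v j}

lemma measurableSet_fhitTupleFin {r : ℕ} {c : ℝ} : MeasurableSet (fhitTupleFin r c) := by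
  have h : fhitTupleFin r c = ⋃ j ∈ Finset.Icc 1 r, {v : Fin r → ℝ | c ≤ finPsum v j} := by
    ext v
    simp only [fhitTupleFin, Set.mem_setOf_eq, Set.mem_iUnion, exists_prop]
  rw [h]
  exact MeasurableSet.biUnion (Finset.countable_toSet _) fun j _ =>
    measurableSet_le measurable_const measurable_finPsum

lemma fhit_tuple_eq (m r : ℕ) (c : ℝ) :
    fhit X m r c = (fun ω (i : Fin r) => X (m + 1 + (i : ℕ)) ω) ⁻¹' fhitTupleFin r c := by
  ext ω
  simp only [fhit, fhitTupleFin, Set.mem_preimage, Set.mem_setOf_eq]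
  refine exists_congr fun j => and_congr_right fun hj => ?_
  rw [Finset.mem_Icc] at hj
  rw [finPsum_tuple ω m r j hj.2]

lemma measure_fhit_eq (hm : ∀ i, Measurable (X i))
    (hI : iIndepFun X μ)
    (hid : ∀ i, IdentDistrib (X i) (X 1) μ μ) (m r : ℕ) (c : ℝ) :
    μ (fhit X m r c) = μ (fhit X 0 r c) := by
  rw [fhit_tuple_eq (X := X) m r c, fhit_tuple_eq (X := X) 0 r c]
  exact measure_tuple_preimage_eq hm hI hid _ _
    (fun i j hij => by
      have h' : m + 1 + (i : ℕ) = m + 1 + (j : ℕ) := hij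
      exact Fin.val_injective (by omega))
    (fun i j hij => by
      have h' : 0 + 1 + (i : ℕ) = 0 + 1 + (j : ℕ) := hij
      exact Fin.val_injective (by omega))
    measurableSet_fhitTupleFin

lemma fhit_zero_subset_escSet (r : ℕ) (c : ℝ) : fhit X 0 r c ⊆ escSet X c := by
  intro ω hω
  obtain ⟨j, hj, hc⟩ := hω
  rw [Finset.mem_Icc] at hj
  refine ⟨j, hj.1, ?_⟩
  rw [show (0 : ℕ) + j = j from by omega] at hc
  rw [walkSum_zero] at hc
  linarith

def negJumpSet (X : ℕ → Ω → ℝ) (m : ℕ) (δ : ℝ) : Set Ω :=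
  ⋂ i ∈ Finset.Icc 1 m, {ω | X i ω ≤ -δ}

lemma measurableSet_negJumpSet (hm : ∀ i, Measurable (X i)) (m : ℕ) (δ : ℝ) :
    MeasurableSet (negJumpSet X m δ) :=
  MeasurableSet.biInter (Finset.countable_toSet _) fun i _ =>
    measurableSet_le (hm i) measurable_const

lemma measure_negJumpSet (hm : ∀ i, Measurable (X i))
    (hI : iIndepFun X μ)
    (hid : ∀ i, IdentDistrib (X i) (X 1) μ μ) (m : ℕ) (δ : ℝ) :
    μ (negJumpSet X m δ) = μ {ω | X 1 ω ≤ -δ} ^ m := by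
  have h : negJumpSet X m δ = ⋂ i ∈ Finset.Icc 1 m, X i ⁻¹' (Set.Iic (-δ)) := rfl
  rw [h, hI.measure_inter_preimage_eq_mul (Finset.Icc 1 m)
    (sets := fun _ => Set.Iic (-δ)) (fun i _ => measurableSet_Iic)]
  have hconst : ∀ i ∈ Finset.Icc 1 m, μ (X i ⁻¹' Set.Iic (-δ)) = μ {ω | X 1 ω ≤ -δ} := by
    intro i _
    have := (hid i).measure_mem_eq (s := Set.Iic (-δ)) measurableSet_Iic
    simpa [Set.preimage, Set.Iic] using this
  rw [Finset.prod_congr rfl hconst, Finset.prod_const, Nat.card_Icc]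
  norm_num

def negJumpTuple (m : ℕ) (δ : ℝ) : Set ({x // x ∈ Finset.Icc 1 m} → ℝ) := {v | ∀ i, v i ≤ -δ}

lemma measurableSet_negJumpTuple {m : ℕ} {δ : ℝ} : MeasurableSet (negJumpTuple m δ) := by
  have h : negJumpTuple m δ = ⋂ i : {x // x ∈ Finset.Icc 1 m}, {v | v i ≤ -δ} := by
    ext v; simp [negJumpTuple]
  rw [h]
  exact MeasurableSet.iInter fun i =>
    measurableSet_le (measurable_pi_apply i) measurable_const

lemma negJumpSet_eq_preimage (m : ℕ) (δ : ℝ) :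
    negJumpSet X m δ
      = (fun ω (i : {x // x ∈ Finset.Icc 1 m}) => X (i : ℕ) ω) ⁻¹' negJumpTuple m δ := by
  ext ω
  simp only [negJumpSet, negJumpTuple, Set.mem_preimage, Set.mem_iInter, Set.mem_setOf_eq]
  constructor
  · intro h i
    exact h (i : ℕ) i.2
  · intro h i hi
    exact h ⟨i, hi⟩

def fhitTupleSub (m r : ℕ) (c : ℝ) : Set ({x // x ∈ Finset.Icc (m + 1) (m + r)} → ℝ) :=
  {v | ∃ j ∈ Finset.Icc 1 r, c ≤ subPsum _ v (m + j)}

lemma measurableSet_fhitTupleSub {m r : ℕ} {c : ℝ} : MeasurableSet (fhitTupleSub m r c) := by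
  have h : fhitTupleSub m r c = ⋃ j ∈ Finset.Icc 1 r,
      {v : {x // x ∈ Finset.Icc (m + 1) (m + r)} → ℝ | c ≤ subPsum _ v (m + j)} := by
    ext v
    simp only [fhitTupleSub, Set.mem_setOf_eq, Set.mem_iUnion, exists_prop]
  rw [h]
  exact MeasurableSet.biUnion (Finset.countable_toSet _) fun j _ =>
    measurableSet_le measurable_const measurable_subPsum

lemma fhit_eq_preimage_sub (m r : ℕ) (c : ℝ) :
    fhit X m r c
      = (fun ω (i : {x // x ∈ Finset.Icc (m + 1) (m + r)}) => X (i : ℕ) ω)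
        ⁻¹' fhitTupleSub m r c := by
  ext ω
  simp only [fhit, fhitTupleSub, Set.mem_preimage, Set.mem_setOf_eq]
  refine exists_congr fun j => and_congr_right fun hj => ?_
  rw [Finset.mem_Icc] at hj
  rw [subPsum_Icc_two ω (by omega : m ≤ m + j) (by omega : m + j ≤ m + r)]

lemma measure_negJump_inter_fhit (hm : ∀ i, Measurable (X i))
    (hI : iIndepFun X μ) (m r : ℕ) (δ c : ℝ) :
    μ (negJumpSet X m δ ∩ fhit X m r c)
      = μ (negJumpSet X m δ) * μ (fhit X m r c) := by
  have hdisj : Disjoint (Finset.Icc 1 m) (Finset.Icc (m + 1) (m + r)) := by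
    rw [Finset.disjoint_left]
    intro x hx hx'
    rw [Finset.mem_Icc] at hx hx'
    omega
  have hindep := hI.indepFun_finset _ _ hdisj hm
  rw [negJumpSet_eq_preimage (X := X) m δ, fhit_eq_preimage_sub (X := X) m r c]
  exact (indepFun_iff_measure_inter_preimage_eq_mul.1 hindep) _ _
    measurableSet_negJumpTuple measurableSet_fhitTupleSub

lemma measure_hitSet_lt_one (hm : ∀ i, Measurable (X i))
    (hI : iIndepFun X μ)
    (hid : ∀ i, IdentDistrib (X i) (X 1) μ μ)
    (hint : Integrable (X 1) μ) {a : ℝ} (ha : 0 < a) (hmean : μ[X 1] = -a) :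
    μ (hitSet X) < 1 := by
  -- find a negative jump with positive probability
  have hδ : ∃ δ : ℝ, 0 < δ ∧ 0 < μ {ω | X 1 ω ≤ -δ} := by
    by_contra hcon
    push_neg at hcon
    have hnull : ∀ n : ℕ, μ {ω | X 1 ω ≤ -(1 / ((n : ℝ) + 1))} = 0 := fun n =>
      le_antisymm (hcon _ (by positivity)) zero_le
    have hsetneg : {ω | X 1 ω < 0} = ⋃ n : ℕ, {ω | X 1 ω ≤ -(1 / ((n : ℝ) + 1))} := by
      ext ω
      simp only [Set.mem_setOf_eq, Set.mem_iUnion]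
      constructor
      · intro h
        obtain ⟨n, hn⟩ := exists_nat_one_div_lt (show (0 : ℝ) < -X 1 ω by linarith)
        exact ⟨n, by linarith⟩
      · rintro ⟨n, hn⟩
        have hpos : (0 : ℝ) < 1 / ((n : ℝ) + 1) := by positivity
        linarith
    have h0 : μ {ω | X 1 ω < 0} = 0 := by
      rw [hsetneg]
      exact measure_iUnion_null hnull
    have hae : ∀ᵐ ω ∂μ, 0 ≤ X 1 ω := by
      rw [ae_iff]
      have : {ω | ¬0 ≤ X 1 ω} = {ω | X 1 ω < 0} := by
        ext ω; simp [not_le]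
      rw [this]
      exact h0
    have hpos := integral_nonneg_of_ae hae
    rw [hmean] at hpos
    linarith
  obtain ⟨δ, hδpos, hp0⟩ := hδ
  -- choose a level c₀ that the walk exceeds with probability < 1/2
  have htendA : Antitone fun c : ℕ => escSet X (c : ℝ) := by
    intro c c' hcc'
    rintro ω ⟨j, hj, hc⟩
    exact ⟨j, hj, le_trans (by exact_mod_cast hcc') hc⟩
  have htend : Tendsto (fun c : ℕ => μ (escSet X (c : ℝ))) atTop (𝓝 0) := by
    have h := tendsto_measure_iInter_atTop (μ := μ)
      (fun c : ℕ => (measurableSet_escSet hm (c : ℝ)).nullMeasurableSet)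
      htendA ⟨0, measure_ne_top μ _⟩
    rwa [measure_iInter_escSet hm hI hid hint ha hmean] at h
  have hhalf : ∀ᶠ c : ℕ in atTop, μ (escSet X (c : ℝ)) < 2⁻¹ :=
    htend.eventually_lt_const (by norm_num)
  obtain ⟨c₀, hc₀⟩ := hhalf.exists
  -- choose m with m δ ≥ c₀
  obtain ⟨m, hm1, hmδ⟩ : ∃ m : ℕ, 1 ≤ m ∧ (c₀ : ℝ) ≤ m * δ := by
    obtain ⟨k, hk⟩ := exists_nat_gt ((c₀ : ℝ) / δ)
    refine ⟨max k 1, le_max_right _ _, ?_⟩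
    have hkm : (k : ℝ) ≤ (max k 1 : ℕ) := by exact_mod_cast le_max_left k 1
    have hlt : (c₀ : ℝ) / δ < (max k 1 : ℕ) := lt_of_lt_of_le hk hkm
    rw [div_lt_iff₀ hδpos] at hlt
    linarith
  set A := negJumpSet X m δ with hA
  have hAmeas : MeasurableSet A := measurableSet_negJumpSet hm m δ
  have hApos : 0 < μ A := by
    rw [hA, measure_negJumpSet hm hI hid m δ]
    exact ENNReal.pow_pos hp0 m
  have hAsum : ∀ ω ∈ A, ∀ j, 1 ≤ j → j ≤ m → walkSum X j ω ≤ -((j : ℝ) * δ) := by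
    intro ω hω j hj1 hjm
    have hterm : ∀ i ∈ Finset.Icc 1 j, X i ω ≤ -δ := by
      intro i hi
      rw [Finset.mem_Icc] at hi
      exact Set.mem_iInter₂.1 hω i (Finset.mem_Icc.2 ⟨hi.1, le_trans hi.2 hjm⟩)
    calc walkSum X j ω ≤ ∑ _i ∈ Finset.Icc 1 j, (-δ) := Finset.sum_le_sum hterm
      _ = -((j : ℝ) * δ) := by
          rw [Finset.sum_const, Nat.card_Icc]
          simp only [Nat.add_sub_cancel, nsmul_eq_mul]
          ring
  set FH := ⋃ r : ℕ, fhit X m r (c₀ : ℝ) with hFH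
  have hFHmeas : MeasurableSet FH := MeasurableSet.iUnion fun r => measurableSet_fhit hm m r _
  have hdisjhit : hitSet X ∩ (A ∩ FHᶜ) = ∅ := by
    rw [Set.eq_empty_iff_forall_notMem]
    rintro ω ⟨⟨j, hj1, hjS⟩, hA', hFH'⟩
    rcases le_or_gt j m with hjm | hjm
    · have hneg := hAsum ω hA' j hj1 hjm
      have hjd : 0 < (j : ℝ) * δ := by
        have : (0 : ℝ) < (j : ℝ) := by exact_mod_cast hj1
        positivity
      linarith
    · apply hFH'
      refine Set.mem_iUnion.2 ⟨j - m, j - m, Finset.mem_Icc.2 ⟨by omega, le_refl _⟩, ?_⟩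
      rw [show m + (j - m) = j by omega]
      have hSm := hAsum ω hA' m hm1 (le_refl m)
      have hmd : (m : ℝ) * δ ≤ -walkSum X m ω := by linarith
      linarith
  have hsup : μ (A ∩ FH) ≤ μ A * 2⁻¹ := by
    have hmono : Monotone fun r : ℕ => A ∩ fhit X m r (c₀ : ℝ) := by
      intro r r' hrr'
      apply Set.inter_subset_inter_right
      rintro ω ⟨j, hj, hc⟩
      rw [Finset.mem_Icc] at hj
      exact ⟨j, Finset.mem_Icc.2 ⟨hj.1, le_trans hj.2 hrr'⟩, hc⟩
    have hiu : A ∩ FH = ⋃ r : ℕ, (A ∩ fhit X m r (c₀ : ℝ)) := by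
      rw [hFH, Set.inter_iUnion]
    rw [hiu, hmono.measure_iUnion]
    refine iSup_le fun r => ?_
    rw [measure_negJump_inter_fhit hm hI m r δ (c₀ : ℝ)]
    refine mul_le_mul_right ?_ _
    rw [measure_fhit_eq hm hI hid m r _]
    exact le_trans (measure_mono (fhit_zero_subset_escSet r _)) (le_of_lt hc₀)
  have hlower : μ A / 2 ≤ μ (A ∩ FHᶜ) := by
    have hdiff : A ∩ FHᶜ = A \ (A ∩ FH) := by
      ext ω
      simp only [Set.mem_inter_iff, Set.mem_compl_iff, Set.mem_diff]
      tauto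
    rw [hdiff, measure_diff Set.inter_subset_left
      ((hAmeas.inter hFHmeas).nullMeasurableSet) (measure_ne_top μ _)]
    have h1 : μ A - μ A * 2⁻¹ ≤ μ A - μ (A ∩ FH) := tsub_le_tsub_left hsup _
    have h2 : μ A * 2⁻¹ = μ A / 2 := by rw [ENNReal.div_eq_inv_mul, mul_comm]
    have h3 : μ A - μ A / 2 = μ A / 2 := ENNReal.sub_half (measure_ne_top μ A)
    calc μ A / 2 = μ A - μ A / 2 := h3.symm
      _ = μ A - μ A * 2⁻¹ := by rw [h2]
      _ ≤ μ A - μ (A ∩ FH) := h1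
  have hsum1 : μ (hitSet X) + μ (A ∩ FHᶜ) ≤ 1 := by
    rw [← measure_union (Set.disjoint_iff_inter_eq_empty.2 hdisjhit)
      (hAmeas.inter hFHmeas.compl)]
    exact prob_le_one
  have hq : μ (hitSet X) + μ A / 2 ≤ 1 :=
    le_trans (add_le_add_right hlower _) hsum1
  have hne0 : μ A / 2 ≠ 0 := by
    rw [Ne, ENNReal.div_eq_zero_iff]
    push_neg
    exact ⟨ne_of_gt hApos, by norm_num⟩
  calc μ (hitSet X) < μ (hitSet X) + μ A / 2 :=
        ENNReal.lt_add_right (measure_ne_top μ _) hne0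
    _ ≤ 1 := hq

end Records

/-- for a random walk with negative drift,
`∑_{k ≥ 1} P(L_k ≥ 0) < ∞`. -/
theorem summable_prob_min_nonneg {Ω : Type*} [MeasurableSpace Ω] (μ : Measure Ω)
    [IsProbabilityMeasure μ] (X : ℕ → Ω → ℝ) (hiid : IsIIDWalk μ X)
    (a : ℝ) (ha : 0 < a) (hint : Integrable (X 1) μ) (hmean : μ[X 1] = -a) :
    Summable (fun k : ℕ => (μ {ω | walkMin X (k + 1) ω ≥ 0}).toReal) := by
  obtain ⟨hm, hI, hid⟩ := hiid
  have hqlt := measure_hitSet_lt_one hm hI hid hint ha hmean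
  have hCne : ((1 : ℝ≥0∞) - μ (hitSet X))⁻¹ ≠ ∞ := by
    rw [Ne, ENNReal.inv_eq_top, tsub_eq_zero_iff_le]
    exact not_le.2 hqlt
  refine summable_of_sum_range_le (c := ((1 - μ (hitSet X))⁻¹).toReal)
    (fun n => ENNReal.toReal_nonneg) (fun K => ?_)
  have hmeaseq : ∀ k : ℕ, μ {ω | walkMin X (k + 1) ω ≥ 0} = μ {ω | isRec X (k + 1) ω} := by
    intro k
    have hterm : {ω : Ω | walkMin X (k + 1) ω ≥ 0}
        = {ω | ∀ j ∈ Finset.Icc 1 (k + 1), 0 ≤ walkSum X j ω} := by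
      ext ω; exact walkMin_nonneg_iff (by omega) ω
    rw [hterm, duality hm hI hid (k + 1)]
    rfl
  have hsum : ∑ k ∈ Finset.range K, μ {ω | walkMin X (k + 1) ω ≥ 0}
      = ∑ n ∈ Finset.Icc 1 K, μ {ω | isRec X n ω} := by
    rw [show Finset.Icc 1 K = Finset.Ico 1 (K + 1) from (Finset.Ico_add_one_right_eq_Icc 1 K).symm,
      Finset.sum_Ico_eq_sum_range]
    simp only [Nat.add_sub_cancel]
    exact Finset.sum_congr rfl fun k _ => by rw [hmeaseq k, add_comm 1 k]
  have hbound := sum_measure_isRec_le hm hI hid K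
  have hfin : ∀ k ∈ Finset.range K, μ {ω | walkMin X (k + 1) ω ≥ 0} ≠ ∞ :=
    fun k _ => measure_ne_top μ _
  calc ∑ k ∈ Finset.range K, (μ {ω | walkMin X (k + 1) ω ≥ 0}).toReal
      = (∑ k ∈ Finset.range K, μ {ω | walkMin X (k + 1) ω ≥ 0}).toReal :=
        (ENNReal.toReal_sum hfin).symm
    _ ≤ ((1 - μ (hitSet X))⁻¹).toReal := ENNReal.toReal_mono hCne (hsum ▸ hbound)
end
end

section
/- Let A(x) = l(x)/x^{\beta} with l slowly varying and \beta > 2. If for every fixed \Delta > 0 one has x\,[l(x+\Delta)/l(x) - 1] \to 0 as x \to \infty, then for every \Delta > 0, A(x) - A(x+\Delta) = (\Delta \beta A(x)/x)(1 + o(1)) as x \to \infty. -/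
open MeasureTheory ProbabilityTheory Filter Set Asymptotics

noncomputable section

/-- local tail asymptotics from the slow-variation remainder
condition. -/
theorem local_tail_asymptotics (l : ℝ → ℝ) (hl : SlowlyVarying l)
    (β : ℝ) (hβ : 2 < β) (A : ℝ → ℝ) (hA : ∀ x : ℝ, 0 < x → A x = l x / x ^ β)
    (hrem : ∀ Δ : ℝ, 0 < Δ →
      Tendsto (fun x => x * (l (x + Δ) / l x - 1)) atTop (nhds 0)) :
    ∀ Δ : ℝ, 0 < Δ →
      (fun x => A x - A (x + Δ)) ~[atTop] (fun x => Δ * β * A x / x) := by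
  intro Δ hΔ
  obtain ⟨hlpos, -⟩ := hl
  have hβ0 : (0:ℝ) < β := by linarith
  have hΔβ : Δ * β ≠ 0 := by positivity
  set F : ℝ → ℝ := fun u => (1 + u) ^ (-β) with hFdef
  -- derivative of F at 0 is -β
  have hF : HasDerivAt F (-β) 0 := by
    have h1 : HasDerivAt (fun u : ℝ => 1 + u) 1 0 := by
      simpa using (hasDerivAt_id (0:ℝ)).const_add 1
    have h2 : HasDerivAt (fun y : ℝ => y ^ (-β)) (-β * (1:ℝ) ^ (-β - 1)) ((fun u : ℝ => 1 + u) 0) := by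
      simpa using Real.hasDerivAt_rpow_const (x := (1:ℝ)) (p := -β) (Or.inl one_ne_zero)
    have := h2.comp 0 h1
    simpa [Real.one_rpow, Function.comp_def, hFdef] using this
  have hslope : Tendsto (fun u => (F u - 1) / u) (nhdsWithin 0 {(0:ℝ)}ᶜ) (nhds (-β)) := by
    have := hasDerivAt_iff_tendsto_slope.mp hF
    have hF0 : F 0 = 1 := by simp [hFdef]
    simpa [slope_fun_def, hF0, div_eq_inv_mul] using this
  have hu0 : Tendsto (fun x : ℝ => Δ / x) atTop (nhds 0) := by
    simpa using tendsto_inv_atTop_zero.const_mul Δ |>.congr (fun x => by rw [div_eq_mul_inv])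
  have hu : Tendsto (fun x : ℝ => Δ / x) atTop (nhdsWithin 0 {(0:ℝ)}ᶜ) := by
    rw [tendsto_nhdsWithin_iff]
    refine ⟨hu0, ?_⟩
    filter_upwards [eventually_gt_atTop (0:ℝ)] with x hx
    have : 0 < Δ / x := div_pos hΔ hx
    exact fun h => absurd (h : Δ / x = 0) (ne_of_gt this)
  have hT : Tendsto (fun x : ℝ => (F (Δ / x) - 1) / (Δ / x)) atTop (nhds (-β)) := hslope.comp hu
  have hP2 : Tendsto (fun x : ℝ => (-Δ) * ((F (Δ / x) - 1) / (Δ / x))) atTop (nhds (Δ * β)) := by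
    have := hT.const_mul (-Δ)
    simpa [mul_comm] using this
  have hP1 : Tendsto (fun x : ℝ => F (Δ / x)) atTop (nhds 1) := by
    have hc : ContinuousAt F 0 := hF.continuousAt
    have := hc.tendsto.comp hu0
    simpa [hFdef, Function.comp_def] using this
  have hP3 := hrem Δ hΔ
  have hH : Tendsto (fun x : ℝ =>
      ((-Δ) * ((F (Δ / x) - 1) / (Δ / x)) - (x * (l (x + Δ) / l x - 1)) * F (Δ / x)) / (Δ * β))
      atTop (nhds 1) := by
    have := (hP2.sub (hP3.mul hP1)).div_const (Δ * β)
    simpa [hΔβ, div_self] using this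
  rw [Asymptotics.isEquivalent_iff_tendsto_one ?hz]
  case hz =>
    filter_upwards [eventually_gt_atTop (0:ℝ), hlpos] with x hx hlx
    have h1 : A x = l x / x ^ β := hA x hx
    have : 0 < Δ * β * A x / x := by
      rw [h1]; positivity
    exact ne_of_gt this
  refine hH.congr' ?_
  filter_upwards [eventually_gt_atTop (0:ℝ), hlpos] with x hx hlx
  have hxΔ : 0 < x + Δ := by linarith
  have hP : (0:ℝ) < x ^ β := Real.rpow_pos_of_pos hx β
  have hQ : (0:ℝ) < (x + Δ) ^ β := Real.rpow_pos_of_pos hxΔ β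
  have hF1 : F (Δ / x) = x ^ β / (x + Δ) ^ β := by
    have e1 : (1:ℝ) + Δ / x = (x + Δ) / x := by field_simp
    rw [hFdef]
    simp only [e1]
    rw [Real.rpow_neg (div_nonneg hxΔ.le hx.le), Real.div_rpow hxΔ.le hx.le, inv_div]
  have hA1 : A x = l x / x ^ β := hA x hx
  have hA2 : A (x + Δ) = l (x + Δ) / (x + Δ) ^ β := hA (x + Δ) hxΔ
  simp only [Pi.div_apply, hA1, hA2, hF1]
  field_simp
  ring
end
end

section
/- Let S_n be a random walk with i.i.d. increments X_i, E[X] = -a < 0, Var(X) = \sigma^2 < \infty, and P(X \in (x,x+\Delta]) \le C\Delta P(X>x)/x for x large, with P(X>x) regularly varying of index -\beta, \beta>2. Set b_n = \beta P(X>an)/(an). For fixed K > 0 and \delta \in (0,1) define R_\delta(M,K) = { \delta a n \le X_1 \le an - M\sqrt{n}, |S_n| \le K } and R(M,K) = { X_1 \ge an + M\sqrt{n}, |S_n| \le K }. Then \lim_{M\to\infty} \limsup_{n\to\infty} b_n^{-1} P( R_\delta(M,K) \cup R(M,K) ) = 0. -/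
open MeasureTheory ProbabilityTheory Filter Set Asymptotics

set_option maxHeartbeats 1000000

noncomputable section

/-- the big jump at time 1 is concentrated in the window
`an ± M√n`. -/
theorem big_jump_concentration {Ω : Type*} [MeasurableSpace Ω] (μ : Measure Ω)
    [IsProbabilityMeasure μ] (X : ℕ → Ω → ℝ) (hiid : IsIIDWalk μ X)
    (a : ℝ) (ha : 0 < a) (hint : Integrable (X 1) μ) (hmean : μ[X 1] = -a)
    (hvar : Integrable (fun ω => (X 1 ω) ^ 2) μ)
    (β : ℝ) (hβ : 2 < β) (sv : ℝ → ℝ) (hsv : SlowlyVarying sv)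
    (htail : ∀ x : ℝ, 0 < x → (μ {ω | X 1 ω > x}).toReal = sv x / x ^ β)
    (hloc : ∃ C : ℝ, 0 < C ∧ ∀ᶠ x in atTop, ∀ Δ : ℝ, 0 < Δ →
      (μ {ω | x < X 1 ω ∧ X 1 ω ≤ x + Δ}).toReal
        ≤ C * Δ * (μ {ω | X 1 ω > x}).toReal / x)
    (b : ℕ → ℝ)
    (hb : ∀ n : ℕ, b n = β * (μ {ω | X 1 ω > a * n}).toReal / (a * n))
    (K : ℝ) (hK : 0 < K) (δ : ℝ) (hδ0 : 0 < δ) (hδ1 : δ < 1) :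
    Tendsto (fun M : ℝ =>
      limsup (fun n : ℕ => (b n)⁻¹ *
        (μ {ω | ((δ * a * n ≤ X 1 ω ∧ X 1 ω ≤ a * n - M * Real.sqrt n) ∨
            X 1 ω ≥ a * n + M * Real.sqrt n) ∧ |walkSum X n ω| ≤ K}).toReal) atTop)
      atTop (nhds 0) := by
  classical
  obtain ⟨hmeas, hindep, hident⟩ := hiid
  obtain ⟨C, hC, hlocev⟩ := hloc
  obtain ⟨x₀, hx₀⟩ := eventually_atTop.1 hlocev
  set T : ℝ → ℝ := fun x => (μ {ω | X 1 ω > x}).toReal with hTdef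
  have hTnonneg : ∀ x, 0 ≤ T x := fun x => ENNReal.toReal_nonneg
  have hTanti : ∀ ⦃x y : ℝ⦄, x ≤ y → T y ≤ T x := by
    intro x y hxy
    exact ENNReal.toReal_mono (measure_ne_top μ _)
      (measure_mono (fun ω hω => lt_of_le_of_lt hxy hω))
  have hX1sq : MemLp (X 1) 2 μ :=
    (memLp_two_iff_integrable_sq (hmeas 1).aestronglyMeasurable).2 hvar
  have hXi2 : ∀ i, MemLp (X i) 2 μ := fun i => (hident i).symm.memLp_snd hX1sq
  have hXiInt : ∀ i, Integrable (X i) μ := fun i => (hident i).integrable_iff.2 hint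
  have hXiMean : ∀ i, μ[X i] = -a := fun i => (hident i).integral_eq.trans hmean
  have hV0 : 0 ≤ variance (X 1) μ := variance_nonneg _ _
  set V : ℝ := variance (X 1) μ with hVdef
  set m : ℕ := ⌊2 * K⌋₊ + 2 with hmdef
  have hm : (2 * K + 1 : ℝ) < m := by
    have h := Nat.lt_floor_add_one (2 * K)
    rw [hmdef]; push_cast; linarith
  have hm1 : 1 ≤ m := by rw [hmdef]; omega
  have hβ0 : (0:ℝ) < β := by linarith
  set Cδ : ℝ := (2 / δ) ^ β with hCδdef
  have hCδpos : 0 < Cδ := Real.rpow_pos_of_pos (by positivity) β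
  set Cstar : ℝ := 16 * C * Cδ * m * V / (β * δ) with hCstardef
  have hbnn : ∀ n : ℕ, 0 ≤ b n := by
    intro n
    rw [hb n]
    exact div_nonneg (mul_nonneg (by linarith) ENNReal.toReal_nonneg)
      (mul_nonneg ha.le (Nat.cast_nonneg n))
  -- the key eventual bound
  have key : ∀ M : ℝ, 1 ≤ M →
      ∀ᶠ n : ℕ in atTop, (b n)⁻¹ *
        (μ {ω | ((δ * a * n ≤ X 1 ω ∧ X 1 ω ≤ a * n - M * Real.sqrt n) ∨
            X 1 ω ≥ a * n + M * Real.sqrt n) ∧ |walkSum X n ω| ≤ K}).toReal ≤ Cstar / M ^ 2 := by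
    intro M hM
    have hMpos : (0:ℝ) < M := lt_of_lt_of_le one_pos hM
    have han : Tendsto (fun n : ℕ => a * (n:ℝ)) atTop atTop :=
      tendsto_natCast_atTop_atTop.const_mul_atTop ha
    have hδan : Tendsto (fun n : ℕ => δ * (a * (n:ℝ))) atTop atTop := han.const_mul_atTop hδ0
    have hev1 : ∀ᶠ n : ℕ in atTop, 1 ≤ n := eventually_ge_atTop 1
    have hev2 : ∀ᶠ n : ℕ in atTop, x₀ + 1 ≤ δ * (a * (n:ℝ)) := hδan.eventually_ge_atTop _
    have hev3 : ∀ᶠ n : ℕ in atTop, 2 ≤ δ * (a * (n:ℝ)) := hδan.eventually_ge_atTop _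
    have hev4 : ∀ᶠ n : ℕ in atTop, 2 * (a + K) ≤ M * Real.sqrt n := by
      filter_upwards [eventually_ge_atTop (⌈(2*(a+K))^2⌉₊)] with n hn
      have h1 : (2*(a+K))^2 ≤ (n:ℝ) := le_trans (Nat.le_ceil _) (Nat.cast_le.2 hn)
      have h2 : 2*(a+K) ≤ Real.sqrt n :=
        (Real.le_sqrt (by positivity) (Nat.cast_nonneg n)).2 h1
      nlinarith [Real.sqrt_nonneg (n:ℝ), mul_le_mul_of_nonneg_right hM (Real.sqrt_nonneg (n:ℝ))]
    have hsvle : ∀ᶠ x : ℝ in atTop, sv (δ/2 * x) / sv x ≤ 2 :=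
      (hsv.2 (δ/2) (by positivity)).eventually (eventually_le_nhds one_lt_two)
    have hsv2 : ∀ᶠ x : ℝ in atTop, sv (δ/2 * x) ≤ 2 * sv x := by
      filter_upwards [hsvle, hsv.1] with x hx hpos
      have h := (div_le_iff₀ hpos).1 hx
      linarith
    have hev5 : ∀ᶠ n : ℕ in atTop, sv (δ/2 * (a * (n:ℝ))) ≤ 2 * sv (a * (n:ℝ)) :=
      han.eventually hsv2
    have hev6 : ∀ᶠ n : ℕ in atTop, 0 < sv (a * (n:ℝ)) := han.eventually hsv.1
    filter_upwards [hev1, hev2, hev3, hev4, hev5, hev6] with n h1n hx₀n h2n hMn hsvn hsvp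
    have hn1 : (1:ℝ) ≤ (n:ℝ) := by exact_mod_cast h1n
    have hanpos : (0:ℝ) < a * n := mul_pos ha (by linarith)
    set x0 : ℝ := δ * (a * n) - 1 with hx0def
    have hx0pos : 0 < x0 := by rw [hx0def]; linarith
    have hx0half : δ * (a * n) / 2 ≤ x0 := by rw [hx0def]; linarith
    set S' : Ω → ℝ := fun ω => ∑ i ∈ Finset.Icc 2 n, X i ω with hS'def
    have hS'meas : Measurable S' := by
      rw [hS'def]; exact Finset.measurable_sum _ (fun i _ => hmeas i)
    have hIcc : Finset.Icc 1 n = insert 1 (Finset.Icc 2 n) := by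
      ext k; simp only [Finset.mem_Icc, Finset.mem_insert]; omega
    have h1notin : (1:ℕ) ∉ Finset.Icc 2 n := by simp [Finset.mem_Icc]
    have hsplit : ∀ ω, walkSum X n ω = X 1 ω + S' ω := by
      intro ω; rw [walkSum, hIcc, Finset.sum_insert h1notin]
    have hcard : (Finset.Icc 2 n).card = n - 1 := by rw [Nat.card_Icc]; omega
    have hcastn1 : ((n - 1 : ℕ) : ℝ) = (n:ℝ) - 1 := by
      rw [Nat.cast_sub h1n, Nat.cast_one]
    have hES' : μ[S'] = -(((n:ℝ) - 1) * a) := by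
      have h : μ[S'] = ∑ i ∈ Finset.Icc 2 n, μ[X i] := by
        simp only [hS'def]
        exact integral_finset_sum _ (fun i _ => hXiInt i)
      rw [h, Finset.sum_congr rfl (fun i _ => hXiMean i), Finset.sum_const, hcard,
        nsmul_eq_mul, hcastn1]
      ring
    have hS'2 : MemLp S' 2 μ := by
      rw [hS'def]; exact memLp_finsetSum _ (fun i _ => hXi2 i)
    have hS'eq : S' = ∑ i ∈ Finset.Icc 2 n, X i := by
      rw [hS'def]; ext ω; simp
    have hvarS' : variance S' μ ≤ (n:ℝ) * V := by
      have hpair : (↑(Finset.Icc 2 n) : Set ℕ).Pairwise (fun i j => IndepFun (X i) (X j) μ) :=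
        fun i _ j _ hij => hindep.indepFun hij
      have h := IndepFun.variance_sum (μ := μ) (fun i (_ : i ∈ Finset.Icc 2 n) => hXi2 i) hpair
      rw [hS'eq, h, Finset.sum_congr rfl
        (fun i _ => ((hident i).variance_eq.trans hVdef.symm)), Finset.sum_const, hcard,
        nsmul_eq_mul, hcastn1]
      nlinarith [hV0]
    set cS : ℝ := μ[S'] with hcSdef
    have hcS : cS = -(((n:ℝ) - 1) * a) := hES'
    set r : ℝ := M * Real.sqrt n - (a + K) with hrdef
    have hsqrt1 : 1 ≤ Real.sqrt n := by
      rw [show (1:ℝ) = Real.sqrt 1 from Real.sqrt_one.symm]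
      exact Real.sqrt_le_sqrt hn1
    have hrge : M * Real.sqrt n / 2 ≤ r := by rw [hrdef]; linarith
    have hMsq : 0 < M * Real.sqrt n := by nlinarith
    have hrpos : 0 < r := lt_of_lt_of_le (by linarith) hrge
    set Dr : Set ℝ := {s | r ≤ |s - cS|} with hDrdef
    have hDrmeas : MeasurableSet Dr :=
      measurableSet_le measurable_const ((measurable_id.sub_const cS).abs)
    have hcheb : μ (S' ⁻¹' Dr) ≤ ENNReal.ofReal (4 * V / M ^ 2) := by
      have h := meas_ge_le_variance_div_sq (μ := μ) hS'2 hrpos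
      have hset : S' ⁻¹' Dr = {ω | r ≤ |S' ω - μ[S']|} := by
        ext ω; simp [hDrdef, hcSdef]
      rw [hset]
      refine le_trans h (ENNReal.ofReal_le_ofReal ?_)
      have hsq : Real.sqrt n ^ 2 = (n:ℝ) := Real.sq_sqrt (Nat.cast_nonneg n)
      have hnpos : (0:ℝ) < (n:ℝ) := by linarith
      have hr2 : M ^ 2 * n / 4 ≤ r ^ 2 := by
        have h3 : (M * Real.sqrt n / 2) ^ 2 ≤ r ^ 2 :=
          pow_le_pow_left₀ (by positivity) hrge 2
        have h4 : (M * Real.sqrt n / 2) ^ 2 = M ^ 2 * (Real.sqrt n ^ 2) / 4 := by ring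
        rw [h4, hsq] at h3
        exact h3
      have hd4 : (0:ℝ) < M ^ 2 * n / 4 :=
        div_pos (mul_pos (pow_pos hMpos 2) hnpos) (by norm_num)
      have h1 : variance S' μ / r ^ 2 ≤ ((n:ℝ) * V) / (M ^ 2 * n / 4) :=
        div_le_div₀ (mul_nonneg hnpos.le hV0) hvarS' hd4 hr2
      have h2 : ((n:ℝ) * V) / (M ^ 2 * n / 4) = 4 * V / M ^ 2 := by
        field_simp
      linarith
    have hInd : IndepFun (X 1) S' μ := by
      have h := hindep.indepFun_finsetSum_of_notMem hmeas h1notin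
      rw [← hS'eq] at h
      exact h.symm
    set A : ℕ → Set Ω := fun j => X 1 ⁻¹' Set.Ioc (x0 + j) (x0 + j + 1) with hAdef
    set B : ℕ → Set Ω :=
      fun j => S' ⁻¹' (Set.Icc (-K - x0 - j - 1) (K - x0 - j) ∩ Dr) with hBdef
    -- covering
    have hcover : {ω | ((δ * a * n ≤ X 1 ω ∧ X 1 ω ≤ a * n - M * Real.sqrt n) ∨
            X 1 ω ≥ a * n + M * Real.sqrt n) ∧ |walkSum X n ω| ≤ K} ⊆
        ⋃ j : ℕ, (A j ∩ B j) := by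
      rintro ω ⟨hbr, habs⟩
      rw [hsplit ω] at habs
      obtain ⟨habs1, habs2⟩ := abs_le.1 habs
      have hX1lb : δ * (a * n) ≤ X 1 ω := by
        rcases hbr with ⟨h, _⟩ | h
        · linarith [h]
        · nlinarith [hMsq.le]
      set t : ℝ := X 1 ω - x0 with htdef
      have ht1 : 1 ≤ t := by rw [htdef, hx0def]; linarith
      set j : ℕ := ⌈t⌉₊ - 1 with hjdef
      have hceil1 : 0 < ⌈t⌉₊ := Nat.ceil_pos.mpr (by linarith)
      have hjcast : (j:ℝ) = (⌈t⌉₊ : ℝ) - 1 := by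
        rw [hjdef, Nat.cast_sub hceil1, Nat.cast_one]
      have hup : t ≤ (j:ℝ) + 1 := by
        rw [hjcast]; have := Nat.le_ceil t; linarith
      have hlow : (j:ℝ) < t := by
        rw [hjcast]; have := Nat.ceil_lt_add_one (by linarith : (0:ℝ) ≤ t); linarith
      have hX1eq : X 1 ω = x0 + t := by rw [htdef]; ring
      refine Set.mem_iUnion.2 ⟨j, ?_, ?_⟩
      · simp only [hAdef, Set.mem_preimage, Set.mem_Ioc]
        constructor
        · rw [hX1eq]; linarith
        · rw [hX1eq]; linarith
      · simp only [hBdef, Set.mem_preimage, Set.mem_inter_iff, Set.mem_Icc]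
        refine ⟨⟨?_, ?_⟩, ?_⟩
        · rw [hX1eq] at habs1; linarith
        · rw [hX1eq] at habs2; linarith
        · simp only [hDrdef, Set.mem_setOf_eq]
          rw [le_abs, hcS, hrdef]
          rcases hbr with ⟨_, h⟩ | h
          · left; linarith
          · right; linarith [ha.le]
    have hAle : ∀ j : ℕ, μ (A j) ≤ ENNReal.ofReal (C * T x0 / x0) := by
      intro j
      have hjn : (0:ℝ) ≤ j := Nat.cast_nonneg j
      have hxj : x₀ ≤ x0 + (j:ℝ) := by rw [hx0def]; linarith
      have h := hx₀ (x0 + (j:ℝ)) hxj 1 one_pos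
      have hseteq : {ω | x0 + (j:ℝ) < X 1 ω ∧ X 1 ω ≤ x0 + (j:ℝ) + 1} = A j := by
        simp only [hAdef]; ext ω; simp [Set.mem_Ioc]
      rw [hseteq] at h
      have hTj : (μ {ω | X 1 ω > x0 + (j:ℝ)}).toReal = T (x0 + (j:ℝ)) := by rw [hTdef]
      rw [hTj, mul_one] at h
      have hmono : C * T (x0 + (j:ℝ)) / (x0 + (j:ℝ)) ≤ C * T x0 / x0 :=
        div_le_div₀ (mul_nonneg hC.le (hTnonneg x0))
          (mul_le_mul_of_nonneg_left (hTanti (by linarith)) hC.le) hx0pos (by linarith)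
      calc μ (A j) = ENNReal.ofReal ((μ (A j)).toReal) :=
            (ENNReal.ofReal_toReal (measure_ne_top μ _)).symm
        _ ≤ ENNReal.ofReal (C * T x0 / x0) := ENNReal.ofReal_le_ofReal (le_trans h hmono)
    have hBmeasj : ∀ j : ℕ, MeasurableSet (B j) := by
      intro j; simp only [hBdef]; exact hS'meas (measurableSet_Icc.inter hDrmeas)
    have hBsum : ∑' j : ℕ, μ (B j) ≤ (m : ENNReal) * μ (S' ⁻¹' Dr) := by
      calc ∑' j : ℕ, μ (B j) = ∑' j : ℕ, (∫⁻ ω, (B j).indicator 1 ω ∂μ) :=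
            tsum_congr fun j => (lintegral_indicator_one (hBmeasj j)).symm
        _ = ∫⁻ ω, ∑' j : ℕ, (B j).indicator 1 ω ∂μ :=
            (lintegral_tsum fun j => (measurable_one.indicator (hBmeasj j)).aemeasurable).symm
        _ ≤ ∫⁻ ω, (S' ⁻¹' Dr).indicator (fun _ => (m : ENNReal)) ω ∂μ := by
            refine lintegral_mono fun ω => ?_
            by_cases hωD : S' ω ∈ Dr
            · have hmem : ω ∈ S' ⁻¹' Dr := hωD
              rw [Set.indicator_of_mem hmem]
              set c : ℝ := K - x0 - S' ω with hcdef
              have hsub : ∀ j : ℕ, ω ∈ B j → j ∈ Finset.Icc (⌊c⌋₊ - (m-1)) ⌊c⌋₊ := by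
                intro j hj
                simp only [hBdef, Set.mem_preimage, Set.mem_inter_iff, Set.mem_Icc] at hj
                obtain ⟨⟨hl, hu⟩, _⟩ := hj
                have hjc : (j:ℝ) ≤ c := by rw [hcdef]; linarith
                have hcj : c ≤ (j:ℝ) + 2*K + 1 := by rw [hcdef]; linarith
                have hj1 : j ≤ ⌊c⌋₊ := Nat.le_floor hjc
                have hcnn : (0:ℝ) ≤ c := le_trans (Nat.cast_nonneg j) hjc
                have hfl : (⌊c⌋₊:ℝ) ≤ c := Nat.floor_le hcnn
                have hfl2 : (⌊c⌋₊:ℝ) < (j:ℝ) + (m:ℝ) := by linarith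
                have hfl3 : ⌊c⌋₊ < j + m := by exact_mod_cast hfl2
                simp only [Finset.mem_Icc]
                omega
              calc ∑' j : ℕ, (B j).indicator 1 ω
                  = ∑ j ∈ Finset.Icc (⌊c⌋₊ - (m-1)) ⌊c⌋₊, (B j).indicator 1 ω := by
                    refine tsum_eq_sum fun j hj => ?_
                    exact Set.indicator_of_notMem (fun hmem' => hj (hsub j hmem')) _
                _ ≤ ∑ _j ∈ Finset.Icc (⌊c⌋₊ - (m-1)) ⌊c⌋₊, (1 : ENNReal) := by
                    refine Finset.sum_le_sum fun j _ => ?_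
                    by_cases hh : ω ∈ B j
                    · rw [Set.indicator_of_mem hh]; exact le_refl _
                    · rw [Set.indicator_of_notMem hh]; exact zero_le
                _ = ((Finset.Icc (⌊c⌋₊ - (m-1)) ⌊c⌋₊).card : ENNReal) := by
                    rw [Finset.sum_const, nsmul_eq_mul, mul_one]
                _ ≤ (m : ENNReal) := by
                    have hcard2 : (Finset.Icc (⌊c⌋₊ - (m-1)) ⌊c⌋₊).card ≤ m := by
                      rw [Nat.card_Icc]; omega
                    exact_mod_cast hcard2
            · have hnot : ω ∉ S' ⁻¹' Dr := hωD
              rw [Set.indicator_of_notMem hnot]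
              have h0 : ∀ j : ℕ, (B j).indicator (1 : Ω → ENNReal) ω = 0 := by
                intro j
                refine Set.indicator_of_notMem (fun hmem' => ?_) _
                simp only [hBdef, Set.mem_preimage, Set.mem_inter_iff] at hmem'
                exact hωD hmem'.2
              simp [h0]
        _ = (m : ENNReal) * μ (S' ⁻¹' Dr) := lintegral_indicator_const (hS'meas hDrmeas) _
    have hmE : μ {ω | ((δ * a * n ≤ X 1 ω ∧ X 1 ω ≤ a * n - M * Real.sqrt n) ∨
            X 1 ω ≥ a * n + M * Real.sqrt n) ∧ |walkSum X n ω| ≤ K} ≤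
        ENNReal.ofReal (C * T x0 / x0) * ((m : ENNReal) * ENNReal.ofReal (4*V/M^2)) := by
      calc μ {ω | ((δ * a * n ≤ X 1 ω ∧ X 1 ω ≤ a * n - M * Real.sqrt n) ∨
            X 1 ω ≥ a * n + M * Real.sqrt n) ∧ |walkSum X n ω| ≤ K}
          ≤ μ (⋃ j : ℕ, (A j ∩ B j)) := measure_mono hcover
        _ ≤ ∑' j : ℕ, μ (A j ∩ B j) := measure_iUnion_le _
        _ = ∑' j : ℕ, μ (A j) * μ (B j) := by
            refine tsum_congr fun j => ?_
            simp only [hAdef, hBdef]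
            exact hInd.measure_inter_preimage_eq_mul _ _ measurableSet_Ioc
              (measurableSet_Icc.inter hDrmeas)
        _ ≤ ∑' j : ℕ, ENNReal.ofReal (C * T x0 / x0) * μ (B j) :=
            ENNReal.tsum_le_tsum fun j => mul_le_mul_left (hAle j) _
        _ = ENNReal.ofReal (C * T x0 / x0) * ∑' j : ℕ, μ (B j) := ENNReal.tsum_mul_left
        _ ≤ ENNReal.ofReal (C * T x0 / x0) * ((m : ENNReal) * μ (S' ⁻¹' Dr)) :=
            mul_le_mul_right hBsum _
        _ ≤ ENNReal.ofReal (C * T x0 / x0) * ((m : ENNReal) * ENNReal.ofReal (4*V/M^2)) :=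
            mul_le_mul_right (mul_le_mul_right hcheb _) _
    have hP1 : (0:ℝ) ≤ C * T x0 / x0 := div_nonneg (mul_nonneg hC.le (hTnonneg x0)) hx0pos.le
    have hP2 : (0:ℝ) ≤ 4 * V / M ^ 2 :=
      div_nonneg (by linarith) (by positivity)
    have hEreal : (μ {ω | ((δ * a * n ≤ X 1 ω ∧ X 1 ω ≤ a * n - M * Real.sqrt n) ∨
            X 1 ω ≥ a * n + M * Real.sqrt n) ∧ |walkSum X n ω| ≤ K}).toReal ≤
        (C * T x0 / x0) * ((m:ℝ) * (4 * V / M ^ 2)) := by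
      have hfin : ENNReal.ofReal (C * T x0 / x0) * ((m : ENNReal) * ENNReal.ofReal (4*V/M^2)) ≠ ⊤ :=
        ENNReal.mul_ne_top ENNReal.ofReal_ne_top
          (ENNReal.mul_ne_top (ENNReal.natCast_ne_top m) ENNReal.ofReal_ne_top)
      have h := ENNReal.toReal_mono hfin hmE
      rwa [ENNReal.toReal_mul, ENNReal.toReal_mul, ENNReal.toReal_ofReal hP1,
        ENNReal.toReal_ofReal hP2, ENNReal.toReal_natCast] at h
    have hTan : T (a*(n:ℝ)) = sv (a*n) / (a*n) ^ β := by
      rw [hTdef]; exact htail _ hanpos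
    have hTanpos : 0 < T (a*(n:ℝ)) := by
      rw [hTan]; exact div_pos hsvp (Real.rpow_pos_of_pos hanpos β)
    have hd2pos : (0:ℝ) < δ/2 := by linarith
    have hhalfpos : 0 < δ/2 * (a*(n:ℝ)) := mul_pos hd2pos hanpos
    have hThalf : T (δ/2 * (a*(n:ℝ))) ≤ 2 * Cδ * T (a*(n:ℝ)) := by
      have h1 : T (δ/2 * (a*(n:ℝ))) = sv (δ/2*(a*n)) / (δ/2*(a*n)) ^ β := by
        rw [hTdef]; exact htail _ hhalfpos
      have hrp : (δ/2 * (a*(n:ℝ))) ^ β = (δ/2)^β * (a*(n:ℝ))^β :=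
        Real.mul_rpow hd2pos.le hanpos.le
      have hd2β : (0:ℝ) < (δ/2)^β := Real.rpow_pos_of_pos hd2pos β
      have hanβ : (0:ℝ) < (a*(n:ℝ))^β := Real.rpow_pos_of_pos hanpos β
      have hCδeq : Cδ = ((δ/2)^β)⁻¹ := by
        rw [hCδdef, show (2/δ : ℝ) = (δ/2)⁻¹ by rw [inv_div], Real.inv_rpow hd2pos.le]
      rw [h1, hrp, hTan, hCδeq]
      rw [div_le_iff₀ (mul_pos hd2β hanβ)]
      have heq : 2 * ((δ/2)^β)⁻¹ * (sv (a*(n:ℝ)) / (a*(n:ℝ))^β) * ((δ/2)^β * (a*(n:ℝ))^β)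
          = 2 * sv (a*(n:ℝ)) := by
        field_simp
      rw [heq]
      exact hsvn
    have hTx0 : T x0 ≤ 2 * Cδ * T (a*(n:ℝ)) :=
      le_trans (hTanti (by linarith : δ/2 * (a*(n:ℝ)) ≤ x0)) hThalf
    have hbneq : b n = β * T (a*(n:ℝ)) / (a*(n:ℝ)) := by
      rw [hb n, hTdef]
    have hbnpos : 0 < b n := by
      rw [hbneq]; exact div_pos (mul_pos hβ0 hTanpos) hanpos
    have hbninv : (b n)⁻¹ = (a*(n:ℝ)) / (β * T (a*(n:ℝ))) := by rw [hbneq, inv_div]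
    have hs1 : C * T x0 / x0 ≤ C * (2*Cδ*T (a*(n:ℝ))) / (δ*(a*(n:ℝ))/2) :=
      div_le_div₀
        (mul_nonneg hC.le (mul_nonneg (mul_nonneg (by norm_num) hCδpos.le) (hTnonneg _)))
        (mul_le_mul_of_nonneg_left hTx0 hC.le)
        (div_pos (mul_pos hδ0 hanpos) two_pos) hx0half
    have hmV : (0:ℝ) ≤ (m:ℝ) * (4*V/M^2) := mul_nonneg (Nat.cast_nonneg m) hP2
    have hfinal : (b n)⁻¹ * ((C * (2*Cδ*T (a*(n:ℝ))) / (δ*(a*(n:ℝ))/2)) * ((m:ℝ) * (4*V/M^2)))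
        = Cstar / M^2 := by
      rw [hbninv, hCstardef]
      field_simp [hTanpos.ne', hanpos.ne', hβ0.ne', hδ0.ne', hMpos.ne']
      ring
    calc (b n)⁻¹ * (μ {ω | ((δ * a * n ≤ X 1 ω ∧ X 1 ω ≤ a * n - M * Real.sqrt n) ∨
            X 1 ω ≥ a * n + M * Real.sqrt n) ∧ |walkSum X n ω| ≤ K}).toReal
        ≤ (b n)⁻¹ * ((C * T x0 / x0) * ((m:ℝ) * (4*V/M^2))) :=
          mul_le_mul_of_nonneg_left hEreal (inv_nonneg.2 (hbnn n))
      _ ≤ (b n)⁻¹ * ((C * (2*Cδ*T (a*(n:ℝ))) / (δ*(a*(n:ℝ))/2)) * ((m:ℝ) * (4*V/M^2))) :=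
          mul_le_mul_of_nonneg_left (mul_le_mul_of_nonneg_right hs1 hmV)
            (inv_nonneg.2 (hbnn n))
      _ = Cstar / M^2 := hfinal
  have hupper : Tendsto (fun M : ℝ => Cstar / M ^ 2) atTop (nhds 0) :=
    tendsto_const_nhds.div_atTop (tendsto_pow_atTop two_ne_zero)
  refine tendsto_of_tendsto_of_tendsto_of_le_of_le' tendsto_const_nhds hupper ?_ ?_
  · filter_upwards [eventually_ge_atTop (1:ℝ)] with M hM
    exact le_limsup_of_frequently_le
      (Frequently.of_forall fun n => mul_nonneg (inv_nonneg.2 (hbnn n)) ENNReal.toReal_nonneg)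
      (isBoundedUnder_of_eventually_le (key M hM))
  · filter_upwards [eventually_ge_atTop (1:ℝ)] with M hM
    exact limsup_le_of_le
      (isCoboundedUnder_le_of_le atTop fun n =>
        mul_nonneg (inv_nonneg.2 (hbnn n)) ENNReal.toReal_nonneg)
      (key M hM)
end
end
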